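/- arXiv:1109.1042 — 3 statements merged into one kernel-verified Lean document; each statement's English description precedes it below -/
import Mathlib

section
/- Let A be a central ℓ-arrangement over a field K, H_0 ∈ A, and α := α_{H_0}. Then for each p there is an isomorphism of graded S-modules Ω^p(A) ≅ (Ω^{p−1}(A) ∧ (dα/α)) ⊕ (Ω^p(A) ∧ (dα/α)). -/
open MvPolynomial

noncomputable section

/-- The coordinate ring `K[x_1,…,x_n]`. -/
abbrev PolyR (K : Type) [Field K] (n : ℕ) := MvPolynomial (Fin n) K

/-- The field of rational functions on `K^n`. -/
abbrev Frac (K : Type) [Field K] (n : ℕ) := FractionRing (PolyR K n)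

/-- Differential `p`-forms with rational-function coefficients on `K^n`:
a form is determined by its coefficient on `dx_{i_1} ∧ ⋯ ∧ dx_{i_p}` for each
`p`-element subset `{i_1 < ⋯ < i_p}` of the indices. -/
abbrev Form (K : Type) [Field K] (n p : ℕ) := {s : Finset (Fin n) // s.card = p} → Frac K n

variable (K : Type) [Field K] (n : ℕ)

/-- The linear polynomial `Σ aᵢ xᵢ` attached to a covector `a`. -/
def toPoly (a : Fin n → K) : PolyR K n := ∑ i, C (a i) * X i

/-- algebra map into the fraction field -/
def algF : PolyR K n →+* Frac K n := algebraMap _ _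

/-- Wedge product with a 1-form `η = Σ ηᵢ dxᵢ` (as an `F`-linear map on `p`-forms). -/
def wedgeF (η : Fin n → Frac K n) (p : ℕ) : Form K n p →ₗ[Frac K n] Form K n (p+1) where
  toFun ω s := ∑ i ∈ s.1.attach,
    ((-1 : Frac K n) ^ ((s.1.filter (fun j => j < i.1)).card)) * η i.1 *
      ω ⟨s.1.erase i.1, by simp [Finset.card_erase_of_mem i.2, s.2]⟩
  map_add' x y := by
    funext s
    simp [Finset.sum_add_distrib, mul_add]
  map_smul' c x := by
    funext s
    simp only [Pi.smul_apply, smul_eq_mul, RingHom.id_apply, Finset.mul_sum]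
    exact Finset.sum_congr rfl fun i _ => by ring

/-- Wedge product with a 1-form, as an `S`-linear map. -/
def wedgeR (η : Fin n → Frac K n) (p : ℕ) : Form K n p →ₗ[PolyR K n] Form K n (p+1) :=
  (wedgeF K n η p).restrictScalars _

/-- Contraction (interior product) `⟨θ, ω⟩` of a `(p+1)`-form against a derivation
`θ = Σ θᵢ ∂ᵢ`. -/
def contractF (θ : Fin n → Frac K n) {p : ℕ} (ω : Form K n (p+1)) : Form K n p :=
  fun s => ∑ i ∈ (Finset.univ \ s.1).attach,
    ((-1 : Frac K n) ^ ((s.1.filter (fun j => j < i.1)).card)) * θ i.1 *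
      ω ⟨insert i.1 s.1, by
        rcases Finset.mem_sdiff.mp i.2 with ⟨-, h⟩
        simp [Finset.card_insert_of_notMem h, s.2]⟩

/-- The defining polynomial `Q(A,m) = ∏_{H ∈ A} α_H^{m(H)}` of a multiarrangement. -/
def Qp (hyps : Finset (Fin n → K)) (m : (Fin n → K) → ℕ) : PolyR K n :=
  ∏ a ∈ hyps, toPoly K n a ^ m a

/-- Forms with polynomial (regular) coefficients, as a submodule of all rational forms. -/
def regularForms (p : ℕ) : Submodule (PolyR K n) (Form K n p) :=
  Submodule.pi Set.univ fun _ => Subalgebra.toSubmodule (⊥ : Subalgebra (PolyR K n) (Frac K n))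

/-- Scalar multiplication by a fixed rational function, as an `S`-linear map on forms. -/
def scalF (c : Frac K n) (p : ℕ) : Form K n p →ₗ[PolyR K n] Form K n p :=
  (LinearMap.lsmul (Frac K n) (Form K n p) c).restrictScalars _

/-- The 1-form `dα = Σ aᵢ dxᵢ` of a linear form `α = Σ aᵢ xᵢ`. -/
def dForm (a : Fin n → K) : Fin n → Frac K n := fun i => algF K n (C (a i))

/-- The module `Ω^p(A,m)` of logarithmic differential `p`-forms of the multiarrangement
with hyperplanes (given by defining linear forms) `hyps` and multiplicity `m`:
`Ω^p(A,m) = { ω : Q(A,m)·ω is regular, and (Q(A,m)/α_H^{m(H)})·dα_H ∧ ω is regular ∀ H }`. -/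
def logForms (hyps : Finset (Fin n → K)) (m : (Fin n → K) → ℕ) (p : ℕ) :
    Submodule (PolyR K n) (Form K n p) :=
  (regularForms K n p).comap (scalF K n (algF K n (Qp K n hyps m)) p) ⊓
  ⨅ a ∈ hyps, (regularForms K n (p+1)).comap
    ((scalF K n (algF K n (Qp K n hyps m) / (algF K n (toPoly K n a)) ^ m a) (p+1)).comp
      (wedgeR K n (dForm K n a) p))

/-- The module `D(A,m)` of logarithmic derivations: `θ = Σ θᵢ ∂ᵢ` (encoded by the tuple
`(θ₁,…,θₙ) = (θ(x₁),…,θ(xₙ))`) with `α_H^{m(H)} ∣ θ(α_H)` for all `H`. -/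
def logDer (hyps : Finset (Fin n → K)) (m : (Fin n → K) → ℕ) :
    Submodule (PolyR K n) (Fin n → PolyR K n) where
  carrier := {θ | ∀ a ∈ hyps, toPoly K n a ^ m a ∣ ∑ i, C (a i) * θ i}
  add_mem' := by
    intro x y hx hy a ha
    have : (∑ i, C (a i) * (x + y) i) = (∑ i, C (a i) * x i) + ∑ i, C (a i) * y i := by
      simp [mul_add, Finset.sum_add_distrib]
    rw [this]
    exact dvd_add (hx a ha) (hy a ha)
  zero_mem' := by
    intro a ha
    simp
  smul_mem' := by
    intro c x hx a ha
    have : (∑ i, C (a i) * (c • x) i) = c * ∑ i, C (a i) * x i := by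
      simp [Finset.mul_sum, smul_eq_mul]
      exact Finset.sum_congr rfl fun i _ => by ring
    rw [this]
    exact (hx a ha).mul_left c
open Classical in
/-- index of the first nonzero coordinate of a nonzero covector -/
def leadIdx (a : Fin n → K) (h : a ≠ 0) : Fin n :=
  (Finset.univ.filter fun i => a i ≠ 0).min' (by
    obtain ⟨i, hi⟩ := Function.ne_iff.mp h
    exact ⟨i, Finset.mem_filter.mpr ⟨Finset.mem_univ _, hi⟩⟩)

open Classical in
/-- normalization of a covector: rescale so that the first nonzero coordinate is `1`;
two covectors define the same hyperplane iff they have the same normalization. -/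
def normForm (a : Fin n → K) : Fin n → K :=
  if h : a = 0 then 0 else (a (leadIdx K n a h))⁻¹ • a

/-- the covector of the coordinate hyperplane `H₀ = {x_{n+1} = 0}` -/
def kElast : Fin (n+1) → K := fun i => if i = Fin.last n then 1 else 0

/-- restriction of a linear form on `K^{n+1}` to the hyperplane `H₀ = {x_{n+1} = 0} ≅ K^n` -/
def restrictForm (a : Fin (n+1) → K) : Fin n → K := fun i => a i.castSucc

open Classical in
/-- the hyperplanes of the Ziegler restriction onto `H₀ = {x_{n+1} = 0}`:
the (distinct) hyperplanes `H ∩ H₀`, `H ∈ A ∖ {H₀}` -/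
def zieglerHyps (hyps : Finset (Fin (n+1) → K)) : Finset (Fin n → K) :=
  (hyps.erase (kElast K n)).image fun a => normForm K n (restrictForm K n a)

open Classical in
/-- the Ziegler multiplicity: `m(X) = #{H ∈ A ∖ {H₀} : H ∩ H₀ = X}` -/
def zieglerMult (hyps : Finset (Fin (n+1) → K)) (b : Fin n → K) : ℕ :=
  ((hyps.erase (kElast K n)).filter fun a => normForm K n (restrictForm K n a) = b).card

/-- evaluation at `x_{n+1} = 0`, i.e. restriction of polynomials to `H₀` -/
def ev0 : PolyR K (n+1) →ₐ[K] PolyR K n := aeval (Fin.lastCases 0 X)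

/-- a `p`-subset of `Fin n` as a `p`-subset of `Fin (n+1)` -/
def embedSet {p : ℕ} (s : {s : Finset (Fin n) // s.card = p}) :
    {s : Finset (Fin (n+1)) // s.card = p} :=
  ⟨s.1.image Fin.castSucc, by
    rw [Finset.card_image_of_injective _ (Fin.castSucc_injective n), s.2]⟩

/-- `ResRel f f'` : the rational function `f` on `K^{n+1}` is regular along the generic point
of `H₀ = {x_{n+1} = 0}` and restricts to `f'` there. -/
def ResRel (f : Frac K (n+1)) (f' : Frac K n) : Prop :=
  ∃ g h : PolyR K (n+1), ev0 K n h ≠ 0 ∧ algF K (n+1) h * f = algF K (n+1) g ∧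
    f' = algF K n (ev0 K n g) / algF K n (ev0 K n h)

/-- `ResForm ω δ` : writing `ω = σ ∧ (dx_{n+1}/x_{n+1}) + δ₀` with `σ, δ₀` generated by
`dx_1,…,dx_n`, the residue `δ₀|_{H₀}` equals `δ`; i.e. each coefficient of `ω` on a subset
avoiding the last index restricts to the corresponding coefficient of `δ`. -/
def ResForm {p : ℕ} (ω : Form K (n+1) p) (δ : Form K n p) : Prop :=
  ∀ s : {s : Finset (Fin n) // s.card = p}, ResRel K n (ω (embedSet n s)) (δ s)

/-- `M^p ⊆ Ω^p(A'',m)`: the image of the residue map `res : Ω^p(A) → Ω^p(A'',m)`,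
where `(A'',m)` is the Ziegler restriction of the simple arrangement `A` onto `H₀`. -/
def Mres (hyps : Finset (Fin (n+1) → K)) (p : ℕ) : Submodule (PolyR K n) (Form K n p) :=
  Submodule.span (PolyR K n)
    {δ | δ ∈ logForms K n (zieglerHyps K n hyps) (zieglerMult K n hyps) p ∧
      ∃ ω ∈ logForms K (n+1) hyps (fun _ => 1) p, ResForm K n ω δ}

/-- `x ∈ Frac K n` is a homogeneous rational function of degree `d ∈ ℤ` -/
def IsHomog (d : ℤ) (x : Frac K n) : Prop :=
  x = 0 ∨ ∃ (g h : PolyR K n) (dg dh : ℕ), g.IsHomogeneous dg ∧ h.IsHomogeneous dh ∧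
    h ≠ 0 ∧ d = (dg : ℤ) - (dh : ℤ) ∧ x = algF K n g / algF K n h

/-- a form is homogeneous of degree `d` if all its coefficients are homogeneous rational
functions of degree `d` -/
def IsHomogForm {p : ℕ} (d : ℤ) (ω : Form K n p) : Prop := ∀ s, IsHomog K n d (ω s)

/-- the degree-`d` homogeneous component of a (graded) submodule of forms,
as a `K`-vector space -/
def homogComponent {p : ℕ} (N : Submodule (PolyR K n) (Form K n p)) (d : ℤ) :
    Submodule K (Form K n p) :=
  Submodule.span K {ω | ω ∈ N ∧ IsHomogForm K n d ω}

/-- the coefficient function of the Poincaré series `Poin(N,x) = Σ_d dim_K N_d x^d` -/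
def poinFn {p : ℕ} (N : Submodule (PolyR K n) (Form K n p)) : ℤ → ℤ :=
  fun d => (Module.finrank K ↥(homogComponent K n N d) : ℤ)

/-- dimension of a subquotient `Z/(B ∩ Z)` of `K`-vector spaces -/
def quotDim {W : Type} [AddCommGroup W] [Module K W] (Z B : Submodule K W) : ℕ :=
  Module.finrank K (↥Z ⧸ B.comap Z.subtype)

/-- finite-dimensionality of a subquotient `Z/(B ∩ Z)` of `K`-vector spaces -/
def quotFin {W : Type} [AddCommGroup W] [Module K W] (Z B : Submodule K W) : Prop :=
  Module.Finite K (↥Z ⧸ B.comap Z.subtype)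

/-- the degree-`d` homogeneous component of the `p`-graded piece of the quotient `N/M'`
(for `M' ⊆ N` graded), and its dimension: used for `Poin(C^p, x)` -/
def poinQuotFn {p : ℕ} (N M' : Submodule (PolyR K n) (Form K n p)) : ℤ → ℤ :=
  fun d => (quotDim K (homogComponent K n N d) (homogComponent K n M' d) : ℤ)

/-- `seriesCoeff P N j k` : the coefficient of `t^j x^k` in
`Σ_{p=0}^{N} P_p(x) (t(1-x)-1)^p`, where `P_p(x)` has coefficient function `P p : ℤ → ℤ`. -/
def seriesCoeff (P : ℕ → ℤ → ℤ) (N j : ℕ) : ℤ → ℤ := fun k =>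
  ∑ p ∈ Finset.range (N+1), ∑ r ∈ Finset.range (j+1),
    ((-1 : ℤ) ^ (p - j)) * (p.choose j) * ((-1 : ℤ) ^ r) * (j.choose r) * P p (k - r)

/-- `chiCoeff P N j` : the value at `x = 1` (i.e. `Σ_k` of coefficients, when this series
is a Laurent polynomial in `x`) of the `t^j`-coefficient of `Σ_{p=0}^{N} P_p(x)(t(1-x)-1)^p`;
this is the `t^j`-coefficient of `χ = lim_{x→1} Σ_p Poin(Ω^p,x)(t(1-x)-1)^p`. -/
def chiCoeff (P : ℕ → ℤ → ℤ) (N j : ℕ) : ℤ := ∑ᶠ k : ℤ, seriesCoeff P N j k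

/-- the `t^j` coefficient of the characteristic polynomial `χ(A,m,t)` of a
multiarrangement in `K^n` -/
def chiT (hyps : Finset (Fin n → K)) (m : (Fin n → K) → ℕ) (j : ℕ) : ℤ :=
  chiCoeff (fun p => poinFn K n (logForms K n hyps m p)) n j

/-- the value `χ(A,m,-1)` of the characteristic polynomial of a multiarrangement in `K^n` -/
def chiAtNegOne (hyps : Finset (Fin n → K)) (m : (Fin n → K) → ℕ) : ℤ :=
  ∑ j ∈ Finset.range (n+1), (-1) ^ j * chiT K n hyps m j

/-- Whitney's formula for the characteristic polynomial of a central arrangement: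
`χ(A,t) = Σ_{B ⊆ A} (-1)^{|B|} t^{n - rank B} = Σ_{X ∈ L(A)} μ(X) t^{dim X}`. -/
def charPoly (hyps : Finset (Fin n → K)) : Polynomial ℤ :=
  ∑ B ∈ hyps.powerset, Polynomial.C ((-1 : ℤ) ^ B.card) *
    Polynomial.X ^ (n - Module.finrank K ↥(Submodule.span K (↑B : Set (Fin n → K))))

/-- the reduced characteristic polynomial `χ₀(A,t) = χ(A,t)/(t-1)` -/
def charPoly0 (hyps : Finset (Fin n → K)) : Polynomial ℤ :=
  charPoly K n hyps /ₘ (Polynomial.X - Polynomial.C 1)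

/-- `b_i`, defined by `χ₀(A,t) = Σ_{i} (-1)^{n-i} b_{n-i} t^i` for a central arrangement
in `K^{n+1}` (so `χ₀` has degree `n`) -/
def bval (hyps : Finset (Fin (n+1) → K)) (i : ℕ) : ℤ :=
  (-1) ^ i * (charPoly0 K (n+1) hyps).coeff (n - i)

/-- `σ_i`, defined by `χ(A'',m,t) = Σ_i (-1)^{n-i} σ_{n-i} t^i` for the Ziegler restriction
`(A'',m)` (an `n`-multiarrangement) of a central arrangement in `K^{n+1}` -/
def sval (hyps : Finset (Fin (n+1) → K)) (i : ℕ) : ℤ :=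
  (-1) ^ i * chiT K n (zieglerHyps K n hyps) (zieglerMult K n hyps) (n - i)

/-- `projDimLE R M k` : the `R`-module `M` has projective dimension `≤ k`, i.e. it admits a
projective resolution vanishing in homological degrees `> k`. -/
def projDimLE (R : Type) [CommRing R] (M : Type) [AddCommGroup M] [Module R M] (k : ℕ) : Prop :=
  ∃ P : CategoryTheory.ProjectiveResolution (ModuleCat.of R M),
    ∀ i, k < i → CategoryTheory.Limits.IsZero (P.complex.X i)

/-- A multiarrangement `(A,m)` in `K^n` is tame if `pd Ω^p(A,m) ≤ p` for `p = 0,1,…,n`. -/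
def IsTame (hyps : Finset (Fin n → K)) (m : (Fin n → K) → ℕ) : Prop :=
  ∀ p : ℕ, p ≤ n → projDimLE (PolyR K n) ↥(logForms K n hyps m p) p

/-- cocycles in degree `p` of the complex `(N^•, ∧η)` -/
def Zcoh (η : Fin n → Frac K n) (N : ∀ p : ℕ, Submodule (PolyR K n) (Form K n p)) (p : ℕ) :
    Submodule (PolyR K n) (Form K n p) :=
  N p ⊓ LinearMap.ker (wedgeR K n η p)

/-- coboundaries in degree `p` of the complex `(N^•, ∧η)` -/
def Bcoh (η : Fin n → Frac K n) (N : ∀ p : ℕ, Submodule (PolyR K n) (Form K n p)) :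
    ∀ p : ℕ, Submodule (PolyR K n) (Form K n p)
  | 0 => ⊥
  | (p+1) => Submodule.map (wedgeR K n η p) (N p)

/-- `H^p` of the complex `(N^•, ∧η)` is a finite-dimensional `K`-vector space -/
def HFin (η : Fin n → Frac K n) (N : ∀ p : ℕ, Submodule (PolyR K n) (Form K n p)) (p : ℕ) :
    Prop :=
  quotFin K ((Zcoh K n η N p).restrictScalars K) ((Bcoh K n η N p).restrictScalars K)

/-- the simple (constant `1`) multiplicity -/
def oneMult : (Fin n → K) → ℕ := fun _ => 1

/-- the logarithmic forms `Ω^•(A'',m)` of the Ziegler restriction, as a family -/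
def zieglerForms (hyps : Finset (Fin (n+1) → K)) :
    ∀ p : ℕ, Submodule (PolyR K n) (Form K n p) :=
  fun p => logForms K n (zieglerHyps K n hyps) (zieglerMult K n hyps) p

/-- the Euler derivation `θ_E = Σ xᵢ ∂ᵢ` -/
def eulerDer : Fin n → Frac K n := fun i => algF K n (X i)

/-- the 1-form `dα/α = dx_{n+1}/x_{n+1}` for `α = x_{n+1}` -/
def etaZero : Fin (n+1) → Frac K (n+1) :=
  fun i => if i = Fin.last n then (algF K (n+1) (X (Fin.last n)))⁻¹ else 0

/-- the submodule `Ω^p(A) ∧ (dα/α) ⊆ Ω^{p+1}(A)` for `α = x_{n+1}` -/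
def wedgeImage (hyps : Finset (Fin (n+1) → K)) (p : ℕ) :
    Submodule (PolyR K (n+1)) (Form K (n+1) (p+1)) :=
  Submodule.map (wedgeR K (n+1) (etaZero K n) p) (logForms K (n+1) hyps (oneMult K (n+1)) p)

/-- cocycles of the cokernel complex `(C^• = Ω^•(A'',m)/M^•, ∧η̄)`, as a submodule of
`Ω^p(A'',m)`: forms `ω` with `η̄ ∧ ω ∈ M^{p+1}` -/
def ZcohC (hyps : Finset (Fin (n+1) → K)) (η : Fin n → Frac K n) (p : ℕ) :
    Submodule (PolyR K n) (Form K n p) :=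
  zieglerForms K n hyps p ⊓ (Mres K n hyps (p+1)).comap (wedgeR K n η p)

/-- coboundaries of the cokernel complex `(C^•, ∧η̄)`, as a submodule of `Ω^p(A'',m)`:
`η̄ ∧ Ω^{p-1}(A'',m) + M^p` -/
def BcohC (hyps : Finset (Fin (n+1) → K)) (η : Fin n → Frac K n) (p : ℕ) :
    Submodule (PolyR K n) (Form K n p) :=
  Bcoh K n η (zieglerForms K n hyps) p ⊔ Mres K n hyps p

/-- `H^p` of the cokernel complex `(C^•, ∧η̄)` is finite-dimensional over `K` -/
def HFinC (hyps : Finset (Fin (n+1) → K)) (η : Fin n → Frac K n) (p : ℕ) : Prop :=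
  quotFin K ((ZcohC K n hyps η p).restrictScalars K) ((BcohC K n hyps η p).restrictScalars K)

/-- the restriction `η̄ = η|_{H₀}` of a regular 1-form `η` (given by its polynomial
coefficients) to `H₀ = {x_{n+1} = 0}` -/
def restrict1Form (c : Fin (n+1) → PolyR K (n+1)) : Fin n → Frac K n :=
  fun i => algF K n (ev0 K n (c i.castSucc))

/-- a regular 1-form with polynomial coefficients `c` as a 1-form with rational coefficients -/
def ofPoly1Form (c : Fin n → PolyR K n) : Fin n → Frac K n := fun i => algF K n (c i)

/-- the set `{i₁ < … < i_p} ∪ {n+1}` used to read off the `σ`-part of a form -/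
def insertLast {p : ℕ} (s : {s : Finset (Fin n) // s.card = p}) :
    {s : Finset (Fin (n+1)) // s.card = p+1} :=
  ⟨insert (Fin.last n) (embedSet n s).1, by
    rw [Finset.card_insert_of_notMem, (embedSet n s).2]
    intro h
    obtain ⟨j, -, hj⟩ := Finset.mem_image.mp h
    exact absurd hj (Fin.castSucc_lt_last j).ne⟩

/-- `ResW w δ` : the residue map induced on `Ω^p(A) ∧ (dx_{n+1}/x_{n+1})` sends
`w = δ₀ ∧ (dx_{n+1}/x_{n+1})` to `δ = δ₀|_{H₀}`. -/
def ResW {p : ℕ} (w : Form K (n+1) (p+1)) (δ : Form K n p) : Prop :=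
  ∀ s : {s : Finset (Fin n) // s.card = p},
    ResRel K n (((-1 : Frac K (n+1)) ^ p) * algF K (n+1) (X (Fin.last n)) * w (insertLast n s))
      (δ s)

/-- extension of a linear form on `K^d` to `K^d × K^e` (for product arrangements) -/
def ext1 (d e : ℕ) (a : Fin d → K) : Fin (d+e) → K := Fin.append a 0

/-- extension of a linear form on `K^e` to `K^d × K^e` (for product arrangements) -/
def ext2 (d e : ℕ) (b : Fin e → K) : Fin (d+e) → K := Fin.append 0 b

end
noncomputable section Dev
set_option synthInstance.maxHeartbeats 400000
set_option maxHeartbeats 800000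
open Finset
variable {K : Type} [Field K] {m : ℕ}

/-- total coefficient function -/
def coefAt {p : ℕ} (ω : Form K m p) (t : Finset (Fin m)) : Frac K m :=
  if h : t.card = p then ω ⟨t, h⟩ else 0

lemma coefAt_eq {p : ℕ} (ω : Form K m p) (t : Finset (Fin m)) (h : t.card = p) :
    coefAt ω t = ω ⟨t, h⟩ := dif_pos h

lemma coefAt_self {p : ℕ} (ω : Form K m p) (s : {s : Finset (Fin m) // s.card = p}) :
    coefAt ω s.1 = ω s := by
  rw [coefAt_eq ω s.1 s.2]

lemma wedge_apply (η : Fin m → Frac K m) (p : ℕ) (ω : Form K m p)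
    (s : {s : Finset (Fin m) // s.card = p + 1}) :
    wedgeF K m η p ω s = ∑ i ∈ s.1,
      (-1 : Frac K m) ^ ((s.1.filter (fun j => j < i)).card) * η i * coefAt ω (s.1.erase i) := by
  show ∑ i ∈ s.1.attach, _ = _
  rw [← Finset.sum_attach s.1 (fun i => (-1 : Frac K m) ^ ((s.1.filter (fun j => j < i)).card)
      * η i * coefAt ω (s.1.erase i))]
  refine Finset.sum_congr rfl fun i _ => ?_
  rw [coefAt_eq ω _ (by simp [Finset.card_erase_of_mem i.2, s.2])]

lemma contract_apply (θ : Fin m → Frac K m) (p : ℕ) (ω : Form K m (p+1))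
    (s : {s : Finset (Fin m) // s.card = p}) :
    contractF K m θ ω s = ∑ i ∈ Finset.univ \ s.1,
      (-1 : Frac K m) ^ ((s.1.filter (fun j => j < i)).card) * θ i * coefAt ω (insert i s.1) := by
  show ∑ i ∈ (Finset.univ \ s.1).attach, _ = _
  rw [← Finset.sum_attach (Finset.univ \ s.1)
    (fun i => (-1 : Frac K m) ^ ((s.1.filter (fun j => j < i)).card) * θ i
      * coefAt ω (insert i s.1))]
  refine Finset.sum_congr rfl fun i _ => ?_
  rcases Finset.mem_sdiff.mp i.2 with ⟨-, h⟩
  rw [coefAt_eq ω _ (by simp [Finset.card_insert_of_notMem h, s.2])]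

lemma neg_one_sq_pow (a : ℕ) : ((-1 : Frac K m) ^ a) * ((-1 : Frac K m) ^ a) = 1 := by
  rw [← pow_add]
  exact Even.neg_one_pow ⟨a, rfl⟩

set_option maxHeartbeats 1000000 in
/-- Cartan's identity -/
lemma cartan (θ γ : Fin m → Frac K m) (p : ℕ) (ω : Form K m (p+1)) :
    contractF K m θ (wedgeF K m γ (p+1) ω) + wedgeF K m γ p (contractF K m θ ω)
      = fun s => (∑ i, θ i * γ i) * ω s := by
  funext s
  have hcard : s.1.card = p + 1 := s.2
  -- expand LHS first summand
  have h1 : contractF K m θ (wedgeF K m γ (p+1) ω) s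
      = ∑ i ∈ Finset.univ \ s.1, ((-1 : Frac K m) ^ ((s.1.filter (fun j => j < i)).card) * θ i *
          (∑ k ∈ insert i s.1, (-1 : Frac K m) ^ (((insert i s.1).filter (fun j => j < k)).card)
            * γ k * coefAt ω ((insert i s.1).erase k))) := by
    rw [contract_apply]
    refine Finset.sum_congr rfl fun i hi => ?_
    rcases Finset.mem_sdiff.mp hi with ⟨-, hnot⟩
    rw [coefAt_eq _ _ (by simp [Finset.card_insert_of_notMem hnot, hcard]),
      wedge_apply]
  have h2 : wedgeF K m γ p (contractF K m θ ω) s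
      = ∑ k ∈ s.1, ((-1 : Frac K m) ^ ((s.1.filter (fun j => j < k)).card) * γ k *
          (∑ i ∈ Finset.univ \ (s.1.erase k),
            (-1 : Frac K m) ^ (((s.1.erase k).filter (fun j => j < i)).card)
            * θ i * coefAt ω (insert i (s.1.erase k)))) := by
    rw [wedge_apply]
    refine Finset.sum_congr rfl fun k hk => ?_
    rw [coefAt_eq _ _ (by simp [Finset.card_erase_of_mem hk, hcard]), contract_apply]
  rw [Pi.add_apply, h1, h2]
  have hins : ∀ i ∈ Finset.univ \ s.1,
      ((-1 : Frac K m) ^ ((s.1.filter (fun j => j < i)).card) * θ i *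
        (∑ k ∈ insert i s.1, (-1 : Frac K m) ^ (((insert i s.1).filter (fun j => j < k)).card)
          * γ k * coefAt ω ((insert i s.1).erase k)))
      = θ i * γ i * ω s + ∑ k ∈ s.1,
          ((-1 : Frac K m) ^ ((s.1.filter (fun j => j < i)).card) * θ i *
            ((-1 : Frac K m) ^ (((insert i s.1).filter (fun j => j < k)).card)
              * γ k * coefAt ω ((insert i s.1).erase k))) := by
    intro i hi
    rcases Finset.mem_sdiff.mp hi with ⟨-, hnot⟩
    rw [Finset.sum_insert hnot, mul_add, Finset.mul_sum]
    congr 1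
    have e1 : (insert i s.1).filter (fun j => j < i) = s.1.filter (fun j => j < i) := by
      rw [Finset.filter_insert, if_neg (lt_irrefl i)]
    have e2 : (insert i s.1).erase i = s.1 := Finset.erase_insert hnot
    rw [e1, e2, coefAt_self]
    have := neg_one_sq_pow (K := K) (m := m) ((s.1.filter (fun j => j < i)).card)
    calc (-1 : Frac K m) ^ ((s.1.filter (fun j => j < i)).card) * θ i *
          ((-1 : Frac K m) ^ ((s.1.filter (fun j => j < i)).card) * γ i * ω s)
        = ((-1 : Frac K m) ^ ((s.1.filter (fun j => j < i)).card) *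
            (-1 : Frac K m) ^ ((s.1.filter (fun j => j < i)).card)) * (θ i * γ i * ω s) := by ring
      _ = θ i * γ i * ω s := by rw [this, one_mul]
  have hers : ∀ k ∈ s.1,
      ((-1 : Frac K m) ^ ((s.1.filter (fun j => j < k)).card) * γ k *
        (∑ i ∈ Finset.univ \ (s.1.erase k),
          (-1 : Frac K m) ^ (((s.1.erase k).filter (fun j => j < i)).card)
          * θ i * coefAt ω (insert i (s.1.erase k))))
      = θ k * γ k * ω s + ∑ i ∈ Finset.univ \ s.1,
          ((-1 : Frac K m) ^ ((s.1.filter (fun j => j < k)).card) * γ k *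
            ((-1 : Frac K m) ^ (((s.1.erase k).filter (fun j => j < i)).card)
              * θ i * coefAt ω (insert i (s.1.erase k)))) := by
    intro k hk
    have hset : Finset.univ \ (s.1.erase k) = insert k (Finset.univ \ s.1) := by
      ext j
      simp only [Finset.mem_sdiff, Finset.mem_univ, true_and, Finset.mem_erase,
        Finset.mem_insert, not_and]
      by_cases hj : j = k <;> simp [hj]
    have hknot : k ∉ Finset.univ \ s.1 := by simp [hk]
    rw [hset, Finset.sum_insert hknot, mul_add, Finset.mul_sum]
    congr 1
    have e1 : (s.1.erase k).filter (fun j => j < k) = s.1.filter (fun j => j < k) := by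
      rw [Finset.filter_erase, Finset.erase_eq_of_notMem (by simp)]
    have e2 : insert k (s.1.erase k) = s.1 := Finset.insert_erase hk
    rw [e1, e2, coefAt_self]
    have := neg_one_sq_pow (K := K) (m := m) ((s.1.filter (fun j => j < k)).card)
    calc (-1 : Frac K m) ^ ((s.1.filter (fun j => j < k)).card) * γ k *
          ((-1 : Frac K m) ^ ((s.1.filter (fun j => j < k)).card) * θ k * ω s)
        = ((-1 : Frac K m) ^ ((s.1.filter (fun j => j < k)).card) *
            (-1 : Frac K m) ^ ((s.1.filter (fun j => j < k)).card)) * (θ k * γ k * ω s) := by ring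
      _ = θ k * γ k * ω s := by rw [this, one_mul]
  rw [Finset.sum_congr rfl hins, Finset.sum_congr rfl hers, Finset.sum_add_distrib,
    Finset.sum_add_distrib]
  have hoff : (∑ i ∈ Finset.univ \ s.1, ∑ k ∈ s.1,
      ((-1 : Frac K m) ^ ((s.1.filter (fun j => j < i)).card) * θ i *
        ((-1 : Frac K m) ^ (((insert i s.1).filter (fun j => j < k)).card)
          * γ k * coefAt ω ((insert i s.1).erase k))))
      + (∑ k ∈ s.1, ∑ i ∈ Finset.univ \ s.1,
      ((-1 : Frac K m) ^ ((s.1.filter (fun j => j < k)).card) * γ k *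
        ((-1 : Frac K m) ^ (((s.1.erase k).filter (fun j => j < i)).card)
          * θ i * coefAt ω (insert i (s.1.erase k))))) = 0 := by
    rw [Finset.sum_comm (s := s.1), ← Finset.sum_add_distrib]
    refine Finset.sum_eq_zero fun i hi => ?_
    rw [← Finset.sum_add_distrib]
    refine Finset.sum_eq_zero fun k hk => ?_
    rcases Finset.mem_sdiff.mp hi with ⟨-, hinot⟩
    have hik : i ≠ k := fun h => hinot (h ▸ hk)
    have earg : (insert i s.1).erase k = insert i (s.1.erase k) :=
      Finset.erase_insert_of_ne hik
    rw [earg]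
    rcases hik.lt_or_gt with hlt | hlt
    · -- i < k
      have e1 : (insert i s.1).filter (fun j => j < k) = insert i (s.1.filter (fun j => j < k)) := by
        rw [Finset.filter_insert, if_pos hlt]
      have e2 : (s.1.erase k).filter (fun j => j < i) = s.1.filter (fun j => j < i) := by
        rw [Finset.filter_erase, Finset.erase_eq_of_notMem (by simp [asymm hlt])]
      have c1 : ((insert i s.1).filter (fun j => j < k)).card
          = (s.1.filter (fun j => j < k)).card + 1 := by
        rw [e1, Finset.card_insert_of_notMem (by simp [hinot])]
      rw [c1, e2, pow_succ]
      ring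
    · -- k < i
      have e1 : (insert i s.1).filter (fun j => j < k) = s.1.filter (fun j => j < k) := by
        rw [Finset.filter_insert, if_neg (asymm hlt)]
      have e2 : (s.1.erase k).filter (fun j => j < i) = (s.1.filter (fun j => j < i)).erase k := by
        rw [Finset.filter_erase]
      have hkmem : k ∈ s.1.filter (fun j => j < i) := Finset.mem_filter.mpr ⟨hk, hlt⟩
      have c2 : (s.1.filter (fun j => j < i)).card
          = ((s.1.filter (fun j => j < i)).erase k).card + 1 :=
        (Finset.card_erase_add_one hkmem).symm
      rw [e1, e2, c2, pow_succ]
      ring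
  have hdiag : (∑ i ∈ Finset.univ \ s.1, θ i * γ i * ω s) + (∑ k ∈ s.1, θ k * γ k * ω s)
      = (∑ i, θ i * γ i) * ω s := by
    rw [Finset.sum_sdiff (Finset.subset_univ s.1), ← Finset.sum_mul]
  calc _ = ((∑ i ∈ Finset.univ \ s.1, θ i * γ i * ω s) + (∑ k ∈ s.1, θ k * γ k * ω s))
        + ((∑ i ∈ Finset.univ \ s.1, ∑ k ∈ s.1,
          ((-1 : Frac K m) ^ ((s.1.filter (fun j => j < i)).card) * θ i *
            ((-1 : Frac K m) ^ (((insert i s.1).filter (fun j => j < k)).card)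
              * γ k * coefAt ω ((insert i s.1).erase k))))
        + (∑ k ∈ s.1, ∑ i ∈ Finset.univ \ s.1,
          ((-1 : Frac K m) ^ ((s.1.filter (fun j => j < k)).card) * γ k *
            ((-1 : Frac K m) ^ (((s.1.erase k).filter (fun j => j < i)).card)
              * θ i * coefAt ω (insert i (s.1.erase k)))))) := by ring
    _ = (∑ i, θ i * γ i) * ω s := by rw [hoff, hdiag, add_zero]

variable {n : ℕ}

lemma algF_inj : Function.Injective (algF K m) :=
  IsFractionRing.injective (PolyR K m) (Frac K m)

lemma algF_ne_zero {q : PolyR K m} (h : q ≠ 0) : algF K m q ≠ 0 := by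
  intro h0
  exact h (algF_inj (by simpa using h0))

lemma xlast_ne_zero : algF K (n+1) (X (Fin.last n)) ≠ 0 :=
  algF_ne_zero (MvPolynomial.X_ne_zero _)

lemma filter_lt_last (t : Finset (Fin (n+1))) :
    t.filter (fun j => j < Fin.last n) = t.erase (Fin.last n) := by
  ext j
  simp only [Finset.mem_filter, Finset.mem_erase]
  constructor
  · rintro ⟨hj, hlt⟩; exact ⟨ne_of_lt hlt, hj⟩
  · rintro ⟨hne, hj⟩; exact ⟨hj, lt_of_le_of_ne (Fin.le_last j) hne⟩

lemma wedge_eta_apply (p : ℕ) (ω : Form K (n+1) p) (s : {s : Finset (Fin (n+1)) // s.card = p+1}) :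
    wedgeF K (n+1) (etaZero K n) p ω s =
      if Fin.last n ∈ s.1 then
        (-1 : Frac K (n+1)) ^ p * (algF K (n+1) (X (Fin.last n)))⁻¹ *
          coefAt ω (s.1.erase (Fin.last n))
      else 0 := by
  rw [wedge_apply]
  split_ifs with hs
  · rw [Finset.sum_eq_single_of_mem (Fin.last n) hs]
    · have hc : (s.1.filter (fun j => j < Fin.last n)).card = p := by
        rw [filter_lt_last, Finset.card_erase_of_mem hs, s.2]
        omega
      rw [hc]
      simp [etaZero]
    · intro i hi hne
      simp [etaZero, hne]
  · refine Finset.sum_eq_zero fun i hi => ?_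
    have : i ≠ Fin.last n := fun h => hs (h ▸ hi)
    simp [etaZero, this]

lemma wedge_eta_eta (p : ℕ) (ω : Form K (n+1) p) :
    wedgeF K (n+1) (etaZero K n) (p+1) (wedgeF K (n+1) (etaZero K n) p ω) = 0 := by
  funext s
  rw [wedge_eta_apply]
  split_ifs with hs
  · have hcard : (s.1.erase (Fin.last n)).card = p + 1 := by
      rw [Finset.card_erase_of_mem hs, s.2]
      omega
    rw [coefAt_eq _ _ hcard, wedge_eta_apply]
    rw [if_neg (Finset.notMem_erase _ _)]
    simp
  · rfl

lemma sum_euler_eta : ∑ i, eulerDer K (n+1) i * etaZero K n i = 1 := by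
  have : ∀ i : Fin (n+1), eulerDer K (n+1) i * etaZero K n i =
      if i = Fin.last n then algF K (n+1) (X (Fin.last n)) * (algF K (n+1) (X (Fin.last n)))⁻¹
      else 0 := by
    intro i
    by_cases h : i = Fin.last n <;> simp [eulerDer, etaZero, h]
  rw [Finset.sum_congr rfl fun i _ => this i, Finset.sum_ite_eq' Finset.univ]
  simp [mul_inv_cancel₀ (xlast_ne_zero (K := K) (n := n))]

lemma homotopy (p : ℕ) (ω : Form K (n+1) (p+1)) :
    contractF K (n+1) (eulerDer K (n+1)) (wedgeF K (n+1) (etaZero K n) (p+1) ω)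
      + wedgeF K (n+1) (etaZero K n) p (contractF K (n+1) (eulerDer K (n+1)) ω) = ω := by
  have := cartan (eulerDer K (n+1)) (etaZero K n) p ω
  rw [sum_euler_eta] at this
  rw [this]
  funext s
  simp

lemma cartan0 (θ γ : Fin m → Frac K m) (ω : Form K m 0) :
    contractF K m θ (wedgeF K m γ 0 ω) = fun s => (∑ i, θ i * γ i) * ω s := by
  funext s
  have h0 : s.1 = ∅ := Finset.card_eq_zero.mp s.2
  rw [contract_apply]
  have hterm : ∀ i ∈ Finset.univ \ s.1,
      (-1 : Frac K m) ^ ((s.1.filter (fun j => j < i)).card) * θ i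
        * coefAt (wedgeF K m γ 0 ω) (insert i s.1) = θ i * γ i * ω s := by
    intro i hi
    have hnot : i ∉ s.1 := by simp [h0]
    have hcard : (insert i s.1).card = 1 := by simp [h0]
    rw [coefAt_eq _ _ hcard, wedge_apply]
    have : ∀ k ∈ insert i s.1,
        (-1 : Frac K m) ^ (((insert i s.1).filter (fun j => j < k)).card) * γ k *
          coefAt ω ((insert i s.1).erase k)
        = if k = i then γ i * ω s else 0 := by
      intro k hk
      have hk' : k = i := by
        rw [h0] at hk
        simpa using hk
      subst hk'
      rw [if_pos rfl, h0]
      simp only [LawfulSingleton.insert_empty_eq, Finset.filter_singleton]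
      rw [if_neg (lt_irrefl k), Finset.erase_singleton]
      have : coefAt ω (∅ : Finset (Fin m)) = ω s := by
        rw [coefAt_eq _ _ (by simp)]
        congr 1
        exact Subtype.ext h0.symm
      rw [this]
      simp
    rw [Finset.sum_congr rfl this, Finset.sum_ite_eq' (insert i s.1)]
    rw [if_pos (Finset.mem_insert_self i s.1), h0]
    have : (Finset.filter (fun j => j < i) ∅ : Finset (Fin m)) = ∅ := rfl
    rw [this]
    simp only [Finset.card_empty, pow_zero, one_mul]
    ring
  rw [Finset.sum_congr rfl hterm, h0]
  simp only [Finset.sdiff_empty]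
  rw [← Finset.sum_mul]

lemma homotopy0 (ω : Form K (n+1) 0) :
    contractF K (n+1) (eulerDer K (n+1)) (wedgeF K (n+1) (etaZero K n) 0 ω) = ω := by
  rw [cartan0, sum_euler_eta]
  funext s
  simp

lemma wedge_wedge_eta (γ : Fin (n+1) → Frac K (n+1)) (p : ℕ) (ω : Form K (n+1) p) :
    wedgeF K (n+1) γ (p+1) (wedgeF K (n+1) (etaZero K n) p ω)
      + wedgeF K (n+1) (etaZero K n) (p+1) (wedgeF K (n+1) γ p ω) = 0 := by
  funext s
  rw [Pi.add_apply, wedge_apply, wedge_eta_apply]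
  have hterm : ∀ k ∈ s.1,
      (-1 : Frac K (n+1)) ^ ((s.1.filter (fun j => j < k)).card) * γ k *
        coefAt (wedgeF K (n+1) (etaZero K n) p ω) (s.1.erase k)
      = if Fin.last n ∈ s.1.erase k then
          (-1 : Frac K (n+1)) ^ ((s.1.filter (fun j => j < k)).card) * γ k *
            ((-1 : Frac K (n+1)) ^ p * (algF K (n+1) (X (Fin.last n)))⁻¹ *
              coefAt ω ((s.1.erase k).erase (Fin.last n)))
        else 0 := by
    intro k hk
    rw [coefAt_eq _ _ (by rw [Finset.card_erase_of_mem hk, s.2]; omega), wedge_eta_apply]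
    split_ifs with h
    · rfl
    · exact mul_zero _
  rw [Finset.sum_congr rfl hterm]
  by_cases hL : Fin.last n ∈ s.1
  · have h2 : (if Fin.last n ∈ s.1 then
        (-1 : Frac K (n+1)) ^ (p+1) * (algF K (n+1) (X (Fin.last n)))⁻¹ *
          coefAt (wedgeF K (n+1) γ p ω) (s.1.erase (Fin.last n))
      else 0)
        = ∑ k ∈ s.1.erase (Fin.last n),
            (-1 : Frac K (n+1)) ^ (p+1) * (algF K (n+1) (X (Fin.last n)))⁻¹ *
              ((-1 : Frac K (n+1)) ^ (((s.1.erase (Fin.last n)).filter (fun j => j < k)).card)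
                * γ k * coefAt ω ((s.1.erase (Fin.last n)).erase k)) := by
      rw [if_pos hL, coefAt_eq _ _ (by rw [Finset.card_erase_of_mem hL, s.2]; omega), wedge_apply,
        Finset.mul_sum]
    have h1 : (∑ k ∈ s.1, (if Fin.last n ∈ s.1.erase k then
          (-1 : Frac K (n+1)) ^ ((s.1.filter (fun j => j < k)).card) * γ k *
            ((-1 : Frac K (n+1)) ^ p * (algF K (n+1) (X (Fin.last n)))⁻¹ *
              coefAt ω ((s.1.erase k).erase (Fin.last n)))
        else 0))
        = ∑ k ∈ s.1.erase (Fin.last n), (if Fin.last n ∈ s.1.erase k then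
          (-1 : Frac K (n+1)) ^ ((s.1.filter (fun j => j < k)).card) * γ k *
            ((-1 : Frac K (n+1)) ^ p * (algF K (n+1) (X (Fin.last n)))⁻¹ *
              coefAt ω ((s.1.erase k).erase (Fin.last n)))
        else 0) := by
      refine (Finset.sum_erase _ ?_).symm
      rw [if_neg (Finset.notMem_erase _ _)]
    rw [h1, h2, ← Finset.sum_add_distrib]
    refine Finset.sum_eq_zero fun k hk => ?_
    rcases Finset.mem_erase.mp hk with ⟨hkL, hks⟩
    rw [if_pos (Finset.mem_erase.mpr ⟨Ne.symm hkL, hL⟩)]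
    have efil : (s.1.erase (Fin.last n)).filter (fun j => j < k)
        = s.1.filter (fun j => j < k) := by
      rw [Finset.filter_erase, Finset.erase_eq_of_notMem]
      simp [not_lt.mpr (Fin.le_last k)]
    have eset : (s.1.erase k).erase (Fin.last n) = (s.1.erase (Fin.last n)).erase k :=
      Finset.erase_right_comm
    rw [efil, eset, pow_succ]
    ring
  · rw [if_neg hL, add_zero]
    refine Finset.sum_eq_zero fun k hk => ?_
    rw [if_neg]
    intro h
    exact hL (Finset.mem_of_mem_erase h)

lemma prime_X_last : Prime (X (Fin.last n) : PolyR K (n+1)) := by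
  classical
  rw [← MulEquiv.prime_iff
    ((renameEquiv K (Equiv.swap (Fin.last n) (0 : Fin (n+1)))).trans
      (finSuccEquiv K n)).toMulEquiv]
  show Prime ((finSuccEquiv K n)
    ((rename (Equiv.swap (Fin.last n) (0 : Fin (n+1)))) (X (Fin.last n))))
  rw [rename_X, Equiv.swap_apply_left, finSuccEquiv_X_zero]
  exact Polynomial.prime_X

lemma toPoly_coeff (a : Fin m → K) (i : Fin m) :
    MvPolynomial.coeff (Finsupp.single i 1) (toPoly K m a) = a i := by
  classical
  unfold toPoly
  rw [MvPolynomial.coeff_sum]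
  have : ∀ j ∈ Finset.univ, MvPolynomial.coeff (Finsupp.single i 1) (C (a j) * X j)
      = if j = i then a j else 0 := by
    intro j _
    rw [MvPolynomial.coeff_C_mul, MvPolynomial.coeff_X']
    by_cases h : j = i
    · subst h; simp
    · rw [if_neg (by
        intro hh
        exact h (Finsupp.single_left_injective one_ne_zero hh)), if_neg h]
      simp
  rw [Finset.sum_congr rfl this, Finset.sum_ite_eq' Finset.univ i (fun j => a j)]
  simp

lemma toPoly_eq_zero {a : Fin m → K} (h : toPoly K m a = 0) : a = 0 := by
  funext i
  have := toPoly_coeff a i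
  rw [h] at this
  simpa using this.symm

lemma toPoly_ne_zero {a : Fin m → K} (h : a ≠ 0) : toPoly K m a ≠ 0 :=
  fun hh => h (toPoly_eq_zero hh)

lemma toPoly_kElast : toPoly K (n+1) (kElast K n) = X (Fin.last n) := by
  unfold toPoly kElast
  have : ∀ i ∈ Finset.univ, C (if i = Fin.last n then (1:K) else 0) * X i
      = if i = Fin.last n then (X i : PolyR K (n+1)) else 0 := by
    intro i _
    by_cases h : i = Fin.last n <;> simp [h]
  rw [Finset.sum_congr rfl this, Finset.sum_ite_eq' Finset.univ (Fin.last n) (fun i => (X i : PolyR K (n+1)))]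
  simp

lemma ev0_toPoly (a : Fin (n+1) → K) :
    ev0 K n (toPoly K (n+1) a) = toPoly K n (restrictForm K n a) := by
  unfold toPoly ev0 restrictForm
  rw [map_sum, Fin.sum_univ_castSucc]
  have hlast : aeval (Fin.lastCases 0 X : Fin (n+1) → PolyR K n)
      (C (a (Fin.last n)) * X (Fin.last n)) = 0 := by
    simp
  rw [hlast, add_zero]
  refine Finset.sum_congr rfl fun i _ => ?_
  simp

lemma scalF_apply (c : Frac K m) (p : ℕ) (ω : Form K m p) (s) :
    scalF K m c p ω s = c * ω s := rfl

lemma scal_wedge_apply (c : Frac K m) (η : Fin m → Frac K m) (p : ℕ) (ω : Form K m p) (s) :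
    ((scalF K m c (p+1)).comp (wedgeR K m η p)) ω s = c * wedgeF K m η p ω s := rfl


lemma mem_regularForms_iff {p : ℕ} (ω : Form K m p) :
    ω ∈ regularForms K m p ↔ ∀ s, ω s ∈ (⊥ : Subalgebra (PolyR K m) (Frac K m)) := by
  unfold regularForms
  rw [Submodule.mem_pi]
  constructor
  · intro h s; exact h s (Set.mem_univ s)
  · intro h s _; exact h s

lemma mem_logForms_iff {p : ℕ} (hyps : Finset (Fin m → K)) (mult : (Fin m → K) → ℕ)
    (ω : Form K m p) :
    ω ∈ logForms K m hyps mult p ↔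
      (∀ s, algF K m (Qp K m hyps mult) * ω s ∈ (⊥ : Subalgebra (PolyR K m) (Frac K m))) ∧
      (∀ a ∈ hyps, ∀ s, (algF K m (Qp K m hyps mult) / (algF K m (toPoly K m a)) ^ mult a)
          * wedgeF K m (dForm K m a) p ω s ∈ (⊥ : Subalgebra (PolyR K m) (Frac K m))) := by
  unfold logForms
  rw [Submodule.mem_inf, Submodule.mem_iInf]
  constructor
  · rintro ⟨h1, h2⟩
    constructor
    · intro s
      have := (mem_regularForms_iff _).mp (Submodule.mem_comap.mp h1) s
      simpa only [scalF_apply] using this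
    · intro a ha s
      have h2a := (Submodule.mem_iInf _).mp (h2 a) ha
      have := (mem_regularForms_iff _).mp (Submodule.mem_comap.mp h2a) s
      simpa only [scal_wedge_apply] using this
  · rintro ⟨h1, h2⟩
    constructor
    · rw [Submodule.mem_comap, mem_regularForms_iff]
      intro s
      simpa only [scalF_apply] using h1 s
    · intro a
      rw [Submodule.mem_iInf]
      intro ha
      rw [Submodule.mem_comap, mem_regularForms_iff]
      intro s
      simpa only [scal_wedge_apply] using h2 a ha s

lemma sign_mem (k : ℕ) : ((-1 : Frac K m)) ^ k ∈ (⊥ : Subalgebra (PolyR K m) (Frac K m)) :=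
  pow_mem (neg_mem (one_mem _)) k

lemma euler_mem (i : Fin m) : eulerDer K m i ∈ (⊥ : Subalgebra (PolyR K m) (Frac K m)) :=
  Algebra.mem_bot.mpr ⟨X i, rfl⟩

lemma dForm_mem (a : Fin m → K) (i : Fin m) :
    dForm K m a i ∈ (⊥ : Subalgebra (PolyR K m) (Frac K m)) :=
  Algebra.mem_bot.mpr ⟨C (a i), rfl⟩

lemma sum_euler_dForm (a : Fin m → K) :
    ∑ i, eulerDer K m i * dForm K m a i = algF K m (toPoly K m a) := by
  rw [toPoly, map_sum]
  refine Finset.sum_congr rfl fun i _ => ?_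
  rw [map_mul]
  exact mul_comm _ _

section Arr

variable {K : Type} [Field K] {n : ℕ} (hyps : Finset (Fin (n+1) → K))

lemma hpow1 (a : Fin (n+1) → K) :
    (algF K (n+1) (toPoly K (n+1) a)) ^ (oneMult K (n+1) a) = algF K (n+1) (toPoly K (n+1) a) := by
  simp [oneMult]

lemma contract_mem (p : ℕ) (ω : Form K (n+1) (p+1))
    (hne : ∀ a ∈ hyps, a ≠ 0)
    (hω : ω ∈ logForms K (n+1) hyps (oneMult K (n+1)) (p+1)) :
    contractF K (n+1) (eulerDer K (n+1)) ω ∈ logForms K (n+1) hyps (oneMult K (n+1)) p := by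
  classical
  rw [mem_logForms_iff] at hω ⊢
  obtain ⟨h1, h2⟩ := hω
  constructor
  · intro s
    rw [contract_apply, Finset.mul_sum]
    refine sum_mem fun i hi => ?_
    rcases Finset.mem_sdiff.mp hi with ⟨-, hnot⟩
    rw [coefAt_eq _ _ (by simp [Finset.card_insert_of_notMem hnot, s.2])]
    have : algF K (n+1) (Qp K (n+1) hyps (oneMult K (n+1))) *
        ((-1 : Frac K (n+1)) ^ ((s.1.filter (fun j => j < i)).card) * eulerDer K (n+1) i *
          ω ⟨insert i s.1, by simp [Finset.card_insert_of_notMem hnot, s.2]⟩)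
        = (-1 : Frac K (n+1)) ^ ((s.1.filter (fun j => j < i)).card) * (eulerDer K (n+1) i *
          (algF K (n+1) (Qp K (n+1) hyps (oneMult K (n+1))) *
            ω ⟨insert i s.1, by simp [Finset.card_insert_of_notMem hnot, s.2]⟩)) := by ring
    rw [this]
    exact mul_mem (sign_mem _) (mul_mem (euler_mem _) (h1 _))
  · intro a ha s
    have hβ : algF K (n+1) (toPoly K (n+1) a) ≠ 0 := algF_ne_zero (toPoly_ne_zero (hne a ha))
    have hc := congrFun (cartan (eulerDer K (n+1)) (dForm K (n+1) a) p ω) s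
    rw [Pi.add_apply, sum_euler_dForm] at hc
    have heq : wedgeF K (n+1) (dForm K (n+1) a) p (contractF K (n+1) (eulerDer K (n+1)) ω) s
        = algF K (n+1) (toPoly K (n+1) a) * ω s
          - contractF K (n+1) (eulerDer K (n+1)) (wedgeF K (n+1) (dForm K (n+1) a) (p+1) ω) s := by
      rw [← hc]; ring
    rw [hpow1, heq, mul_sub]
    refine sub_mem ?_ ?_
    · have : algF K (n+1) (Qp K (n+1) hyps (oneMult K (n+1))) / algF K (n+1) (toPoly K (n+1) a)
          * (algF K (n+1) (toPoly K (n+1) a) * ω s)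
          = algF K (n+1) (Qp K (n+1) hyps (oneMult K (n+1))) * ω s := by
        field_simp
      rw [this]
      exact h1 s
    · rw [contract_apply, Finset.mul_sum]
      refine sum_mem fun i hi => ?_
      rcases Finset.mem_sdiff.mp hi with ⟨-, hnot⟩
      rw [coefAt_eq _ _ (by simp [Finset.card_insert_of_notMem hnot, s.2])]
      have hmem := h2 a ha ⟨insert i s.1, by simp [Finset.card_insert_of_notMem hnot, s.2]⟩
      rw [hpow1] at hmem
      have : algF K (n+1) (Qp K (n+1) hyps (oneMult K (n+1))) / algF K (n+1) (toPoly K (n+1) a) *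
          ((-1 : Frac K (n+1)) ^ ((s.1.filter (fun j => j < i)).card) * eulerDer K (n+1) i *
            wedgeF K (n+1) (dForm K (n+1) a) (p+1) ω
              ⟨insert i s.1, by simp [Finset.card_insert_of_notMem hnot, s.2]⟩)
          = (-1 : Frac K (n+1)) ^ ((s.1.filter (fun j => j < i)).card) * (eulerDer K (n+1) i *
            (algF K (n+1) (Qp K (n+1) hyps (oneMult K (n+1))) / algF K (n+1) (toPoly K (n+1) a) *
              wedgeF K (n+1) (dForm K (n+1) a) (p+1) ω
                ⟨insert i s.1, by simp [Finset.card_insert_of_notMem hnot, s.2]⟩)) := by ring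
      rw [this]
      exact mul_mem (sign_mem _) (mul_mem (euler_mem _) hmem)

end Arr

section Arr2

variable {K : Type} [Field K] {n : ℕ} (hyps : Finset (Fin (n+1) → K))

lemma dForm_kElast_apply (i : Fin (n+1)) :
    dForm K (n+1) (kElast K n) i = algF K (n+1) (X (Fin.last n)) * etaZero K n i := by
  by_cases h : i = Fin.last n <;>
    simp [dForm, kElast, etaZero, h, mul_inv_cancel₀ (xlast_ne_zero (K := K) (n := n))]

lemma wedge_dkElast (p : ℕ) (ω : Form K (n+1) p) (s : {s : Finset (Fin (n+1)) // s.card = p+1}) :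
    wedgeF K (n+1) (dForm K (n+1) (kElast K n)) p ω s
      = algF K (n+1) (X (Fin.last n)) * wedgeF K (n+1) (etaZero K n) p ω s := by
  rw [wedge_apply, wedge_apply, Finset.mul_sum]
  refine Finset.sum_congr rfl fun i _ => ?_
  rw [dForm_kElast_apply]
  ring

lemma not_dvd_toPoly (hdist : ∀ a ∈ hyps, ∀ b ∈ hyps, ∀ c : K, a = c • b → a = b)
    (h0 : kElast K n ∈ hyps) {a : Fin (n+1) → K} (ha : a ∈ hyps) (hak : a ≠ kElast K n) :
    ¬ (X (Fin.last n) : PolyR K (n+1)) ∣ toPoly K (n+1) a := by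
  intro hdvd
  obtain ⟨c, hc⟩ := hdvd
  have hev := congrArg (ev0 K n) hc
  rw [map_mul, ev0_toPoly] at hev
  have hXz : ev0 K n (X (Fin.last n)) = 0 := by simp [ev0]
  rw [hXz, zero_mul] at hev
  have hr0 : restrictForm K n a = 0 := toPoly_eq_zero hev
  have hext : a = (a (Fin.last n)) • kElast K n := by
    funext i
    refine Fin.lastCases ?_ ?_ i
    · simp [kElast]
    · intro j
      have hj : a j.castSucc = 0 := congrFun hr0 j
      have hjne : (j.castSucc : Fin (n+1)) ≠ Fin.last n := ne_of_lt (Fin.castSucc_lt_last j)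
      simp [kElast, hjne, hj]
  exact hak (hdist a ha (kElast K n) h0 (a (Fin.last n)) hext)

set_option maxHeartbeats 1000000 in
lemma wedge_eta_mem (p : ℕ) (ω : Form K (n+1) p)
    (hne : ∀ a ∈ hyps, a ≠ 0)
    (hdist : ∀ a ∈ hyps, ∀ b ∈ hyps, ∀ c : K, a = c • b → a = b)
    (h0 : kElast K n ∈ hyps)
    (hω : ω ∈ logForms K (n+1) hyps (oneMult K (n+1)) p) :
    wedgeF K (n+1) (etaZero K n) p ω ∈ logForms K (n+1) hyps (oneMult K (n+1)) (p+1) := by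
  classical
  rw [mem_logForms_iff] at hω ⊢
  obtain ⟨h1, h2⟩ := hω
  have hxne : algF K (n+1) (X (Fin.last n)) ≠ 0 := xlast_ne_zero
  have hkE := h2 (kElast K n) h0
  have hQeta : ∀ s : {s : Finset (Fin (n+1)) // s.card = p+1},
      algF K (n+1) (Qp K (n+1) hyps (oneMult K (n+1))) * wedgeF K (n+1) (etaZero K n) p ω s
        ∈ (⊥ : Subalgebra (PolyR K (n+1)) (Frac K (n+1))) := by
    intro s
    have hh := hkE s
    rw [hpow1, toPoly_kElast, wedge_dkElast] at hh
    have heq : algF K (n+1) (Qp K (n+1) hyps (oneMult K (n+1))) / algF K (n+1) (X (Fin.last n)) *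
        (algF K (n+1) (X (Fin.last n)) * wedgeF K (n+1) (etaZero K n) p ω s)
        = algF K (n+1) (Qp K (n+1) hyps (oneMult K (n+1))) * wedgeF K (n+1) (etaZero K n) p ω s := by
      field_simp
    rwa [heq] at hh
  have hA : ∀ u : {u : Finset (Fin (n+1)) // u.card = p}, Fin.last n ∉ u.1 →
      algF K (n+1) (Qp K (n+1) hyps (oneMult K (n+1))) / algF K (n+1) (X (Fin.last n)) * ω u
        ∈ (⊥ : Subalgebra (PolyR K (n+1)) (Frac K (n+1))) := by
    intro u hu
    have hcard : (insert (Fin.last n) u.1).card = p+1 := by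
      rw [Finset.card_insert_of_notMem hu, u.2]
    have hh := hQeta ⟨insert (Fin.last n) u.1, hcard⟩
    rw [wedge_eta_apply] at hh
    rw [if_pos (Finset.mem_insert_self _ _), Finset.erase_insert hu, coefAt_eq _ _ u.2] at hh
    have hh2 := mul_mem (sign_mem (K := K) (m := n+1) p) hh
    have heq : (-1 : Frac K (n+1))^p * (algF K (n+1) (Qp K (n+1) hyps (oneMult K (n+1))) *
        ((-1 : Frac K (n+1))^p * (algF K (n+1) (X (Fin.last n)))⁻¹ * ω ⟨u.1, u.2⟩))
        = ((-1 : Frac K (n+1))^p * (-1 : Frac K (n+1))^p) *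
          (algF K (n+1) (Qp K (n+1) hyps (oneMult K (n+1))) / algF K (n+1) (X (Fin.last n)) * ω u) := by
      rw [div_eq_mul_inv]
      try ring
    rw [heq, neg_one_sq_pow, one_mul] at hh2
    exact hh2
  constructor
  · exact hQeta
  · intro a ha s
    rw [hpow1]
    have hrw : wedgeF K (n+1) (dForm K (n+1) a) (p+1) (wedgeF K (n+1) (etaZero K n) p ω) s
        = - wedgeF K (n+1) (etaZero K n) (p+1) (wedgeF K (n+1) (dForm K (n+1) a) p ω) s := by
      have hz := congrFun (wedge_wedge_eta (dForm K (n+1) a) p ω) s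
      rw [Pi.add_apply] at hz
      exact eq_neg_of_add_eq_zero_left hz
    rw [hrw, wedge_eta_apply]
    by_cases hL : Fin.last n ∈ s.1
    · rw [if_pos hL]
      have tcard : (s.1.erase (Fin.last n)).card = p+1 := by
        rw [Finset.card_erase_of_mem hL, s.2]
        omega
      have htnot : Fin.last n ∉ s.1.erase (Fin.last n) := Finset.notMem_erase _ _
      rw [coefAt_eq _ _ tcard]
      by_cases hak : a = kElast K n
      · subst hak
        rw [wedge_dkElast, wedge_eta_apply, if_neg htnot]
        simpa using zero_mem (⊥ : Subalgebra (PolyR K (n+1)) (Frac K (n+1)))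
      · have hβ : algF K (n+1) (toPoly K (n+1) a) ≠ 0 := algF_ne_zero (toPoly_ne_zero (hne a ha))
        have hndvd := not_dvd_toPoly hyps hdist h0 ha hak
        have hstep1 : algF K (n+1) (Qp K (n+1) hyps (oneMult K (n+1))) / algF K (n+1) (X (Fin.last n))
            * wedgeF K (n+1) (dForm K (n+1) a) p ω ⟨s.1.erase (Fin.last n), tcard⟩
            ∈ (⊥ : Subalgebra (PolyR K (n+1)) (Frac K (n+1))) := by
          rw [wedge_apply, Finset.mul_sum]
          refine sum_mem fun i hi => ?_
          have hc2 : ((s.1.erase (Fin.last n)).erase i).card = p := by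
            rw [Finset.card_erase_of_mem hi, tcard]
            omega
          rw [coefAt_eq _ _ hc2]
          have hnotin : Fin.last n ∉ (s.1.erase (Fin.last n)).erase i :=
            fun h => htnot (Finset.mem_of_mem_erase h)
          have heq : algF K (n+1) (Qp K (n+1) hyps (oneMult K (n+1))) / algF K (n+1) (X (Fin.last n)) *
              ((-1 : Frac K (n+1)) ^ (((s.1.erase (Fin.last n)).filter (fun j => j < i)).card) *
                dForm K (n+1) a i * ω ⟨(s.1.erase (Fin.last n)).erase i, hc2⟩)
              = (-1 : Frac K (n+1)) ^ (((s.1.erase (Fin.last n)).filter (fun j => j < i)).card) *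
                (dForm K (n+1) a i *
                  (algF K (n+1) (Qp K (n+1) hyps (oneMult K (n+1))) / algF K (n+1) (X (Fin.last n)) *
                    ω ⟨(s.1.erase (Fin.last n)).erase i, hc2⟩)) := by ring
          rw [heq]
          exact mul_mem (sign_mem _) (mul_mem (dForm_mem _ _)
            (hA ⟨(s.1.erase (Fin.last n)).erase i, hc2⟩ hnotin))
        have hstep2 := h2 a ha ⟨s.1.erase (Fin.last n), tcard⟩
        rw [hpow1] at hstep2
        obtain ⟨P, hP'⟩ := Algebra.mem_bot.mp hstep1
        have hP : algF K (n+1) P = algF K (n+1) (Qp K (n+1) hyps (oneMult K (n+1)))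
            / algF K (n+1) (X (Fin.last n))
            * wedgeF K (n+1) (dForm K (n+1) a) p ω ⟨s.1.erase (Fin.last n), tcard⟩ := hP'
        obtain ⟨G, hG'⟩ := Algebra.mem_bot.mp hstep2
        have hG : algF K (n+1) G = algF K (n+1) (Qp K (n+1) hyps (oneMult K (n+1)))
            / algF K (n+1) (toPoly K (n+1) a)
            * wedgeF K (n+1) (dForm K (n+1) a) p ω ⟨s.1.erase (Fin.last n), tcard⟩ := hG'
        have hpoly : toPoly K (n+1) a * G = X (Fin.last n) * P := by
          apply algF_inj
          rw [map_mul, map_mul]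
          show algF K (n+1) (toPoly K (n+1) a) * algF K (n+1) G
            = algF K (n+1) (X (Fin.last n)) * algF K (n+1) P
          rw [hG, hP]
          field_simp
          try ring
        have hdvd : (X (Fin.last n) : PolyR K (n+1)) ∣ G := by
          have hXdvd : (X (Fin.last n) : PolyR K (n+1)) ∣ toPoly K (n+1) a * G := ⟨P, hpoly⟩
          exact ((prime_X_last).2.2 _ _ hXdvd).resolve_left hndvd
        obtain ⟨G', hG'2⟩ := hdvd
        have hD : algF K (n+1) (Qp K (n+1) hyps (oneMult K (n+1))) / algF K (n+1) (toPoly K (n+1) a)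
            * wedgeF K (n+1) (dForm K (n+1) a) p ω ⟨s.1.erase (Fin.last n), tcard⟩
            = algF K (n+1) (X (Fin.last n)) * algF K (n+1) G' := by
          rw [← map_mul, ← hG'2]
          exact hG.symm
        have hval : algF K (n+1) (Qp K (n+1) hyps (oneMult K (n+1))) / algF K (n+1) (toPoly K (n+1) a) *
            (-((-1 : Frac K (n+1)) ^ (p+1) * (algF K (n+1) (X (Fin.last n)))⁻¹ *
              wedgeF K (n+1) (dForm K (n+1) a) p ω ⟨s.1.erase (Fin.last n), tcard⟩))
            = (-1 : Frac K (n+1)) ^ (p+2) * algF K (n+1) G' := by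
          have expand : algF K (n+1) (Qp K (n+1) hyps (oneMult K (n+1))) / algF K (n+1) (toPoly K (n+1) a) *
              (-((-1 : Frac K (n+1)) ^ (p+1) * (algF K (n+1) (X (Fin.last n)))⁻¹ *
                wedgeF K (n+1) (dForm K (n+1) a) p ω ⟨s.1.erase (Fin.last n), tcard⟩))
              = (-1 : Frac K (n+1)) ^ (p+2) * (algF K (n+1) (X (Fin.last n)))⁻¹ *
                (algF K (n+1) (Qp K (n+1) hyps (oneMult K (n+1))) / algF K (n+1) (toPoly K (n+1) a) *
                  wedgeF K (n+1) (dForm K (n+1) a) p ω ⟨s.1.erase (Fin.last n), tcard⟩) := by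
            ring
          rw [expand, hD]
          field_simp
        rw [hval]
        exact mul_mem (sign_mem _) (Algebra.mem_bot.mpr ⟨G', rfl⟩)
    · rw [if_neg hL]
      simpa using zero_mem (⊥ : Subalgebra (PolyR K (n+1)) (Frac K (n+1)))

end Arr2

/-- contraction as an `F`-linear map -/
def contractL (θ : Fin m → Frac K m) (p : ℕ) : Form K m (p+1) →ₗ[Frac K m] Form K m p where
  toFun := contractF K m θ
  map_add' x y := by
    funext s
    simp [contractF, Finset.sum_add_distrib, mul_add]
  map_smul' c x := by
    funext s
    simp only [contractF, Pi.smul_apply, smul_eq_mul, RingHom.id_apply, Finset.mul_sum]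
    exact Finset.sum_congr rfl fun i _ => by ring

/-- contraction as an `S`-linear map -/
def contractR (θ : Fin m → Frac K m) (p : ℕ) : Form K m (p+1) →ₗ[PolyR K m] Form K m p :=
  (contractL θ p).restrictScalars _

lemma isHomog_zero (d : ℤ) : IsHomog K m d 0 := Or.inl rfl

lemma isHomog_add {d : ℤ} {x y : Frac K m} (hx : IsHomog K m d x) (hy : IsHomog K m d y) :
    IsHomog K m d (x + y) := by
  rcases hx with rfl | ⟨g, h, dg, dh, hg, hh, hh0, hd, rfl⟩
  · simpa using hy
  rcases hy with rfl | ⟨g', h', dg', dh', hg', hh', hh0', hd', rfl⟩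
  · right
    exact ⟨g, h, dg, dh, hg, hh, hh0, hd, by simp⟩
  right
  refine ⟨g * h' + h * g', h * h', dg + dh', dh + dh', ?_, hh.mul hh', mul_ne_zero hh0 hh0', by omega, ?_⟩
  · refine (hg.mul hh').add ?_
    have : dh + dg' = dg + dh' := by omega
    exact this ▸ hh.mul hg'
  · have hhne : algF K m h ≠ 0 := algF_ne_zero hh0
    have hhne' : algF K m h' ≠ 0 := algF_ne_zero hh0'
    rw [map_add, map_mul, map_mul, map_mul]
    show algF K m g / algF K m h + algF K m g' / algF K m h' = _
    field_simp

lemma isHomog_mul {d e : ℤ} {x y : Frac K m} (hx : IsHomog K m d x) (hy : IsHomog K m e y) :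
    IsHomog K m (d + e) (x * y) := by
  rcases hx with rfl | ⟨g, h, dg, dh, hg, hh, hh0, hd, rfl⟩
  · exact Or.inl (by simp)
  rcases hy with rfl | ⟨g', h', dg', dh', hg', hh', hh0', hd', rfl⟩
  · exact Or.inl (by simp)
  right
  refine ⟨g * g', h * h', dg + dg', dh + dh', hg.mul hg', hh.mul hh', mul_ne_zero hh0 hh0',
    by omega, ?_⟩
  have hhne : algF K m h ≠ 0 := algF_ne_zero hh0
  have hhne' : algF K m h' ≠ 0 := algF_ne_zero hh0'
  rw [map_mul, map_mul]
  field_simp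

lemma isHomog_algF_X (i : Fin m) : IsHomog K m 1 (algF K m (X i)) := by
  right
  exact ⟨X i, 1, 1, 0, MvPolynomial.isHomogeneous_X _ _, MvPolynomial.isHomogeneous_one _ _,
    one_ne_zero, by omega, by rw [map_one, div_one]⟩

lemma isHomog_sign (k : ℕ) : IsHomog K m 0 ((-1 : Frac K m) ^ k) := by
  right
  refine ⟨(-1 : PolyR K m) ^ k, 1, 0, 0, ?_, MvPolynomial.isHomogeneous_one _ _,
    one_ne_zero, by omega, ?_⟩
  · have : ((-1 : PolyR K m)) ^ k = C ((-1 : K) ^ k) := by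
      rw [map_pow, map_neg, map_one]
    rw [this]
    exact MvPolynomial.isHomogeneous_C _ _
  · rw [map_one, div_one, map_pow, map_neg, map_one]

lemma isHomog_inv_X (i : Fin m) : IsHomog K m (-1) ((algF K m (X i))⁻¹) := by
  right
  exact ⟨1, X i, 0, 1, MvPolynomial.isHomogeneous_one _ _, MvPolynomial.isHomogeneous_X _ _,
    MvPolynomial.X_ne_zero _, by omega, by rw [map_one, one_div]⟩

lemma isHomog_sum {d : ℤ} {ι : Type} (t : Finset ι) (f : ι → Frac K m)
    (hf : ∀ i ∈ t, IsHomog K m d (f i)) : IsHomog K m d (∑ i ∈ t, f i) := by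
  classical
  induction t using Finset.induction_on with
  | empty => simpa using isHomog_zero d
  | insert _ _ hnot ih =>
    rename_i a t
    rw [Finset.sum_insert hnot]
    exact isHomog_add (hf a (Finset.mem_insert_self _ _))
      (ih fun i hi => hf i (Finset.mem_insert_of_mem hi))

lemma isHomogForm_add {p : ℕ} {d : ℤ} {ω τ : Form K m p} (hω : IsHomogForm K m d ω)
    (hτ : IsHomogForm K m d τ) : IsHomogForm K m d (ω + τ) :=
  fun s => isHomog_add (hω s) (hτ s)

lemma isHomogForm_wedge_eta {p : ℕ} {d : ℤ} {ω : Form K (n+1) p}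
    (hω : IsHomogForm K (n+1) d ω) :
    IsHomogForm K (n+1) (d - 1) (wedgeF K (n+1) (etaZero K n) p ω) := by
  intro s
  rw [wedge_eta_apply]
  split_ifs with hs
  · have hcard : (s.1.erase (Fin.last n)).card = p := by
      rw [Finset.card_erase_of_mem hs, s.2]
      omega
    rw [coefAt_eq _ _ hcard]
    have := isHomog_mul (isHomog_mul (isHomog_sign (K := K) (m := n+1) p)
      (isHomog_inv_X (Fin.last n))) (hω ⟨s.1.erase (Fin.last n), hcard⟩)
    have hdeg : ((0 : ℤ) + (-1) + d) = d - 1 := by ring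
    exact hdeg ▸ this
  · exact isHomog_zero _

lemma isHomogForm_contract {p : ℕ} {d : ℤ} {ω : Form K m (p+1)}
    (hω : IsHomogForm K m d ω) :
    IsHomogForm K m (d + 1) (contractF K m (eulerDer K m) ω) := by
  intro s
  rw [contract_apply]
  refine isHomog_sum _ _ fun i hi => ?_
  rcases Finset.mem_sdiff.mp hi with ⟨-, hnot⟩
  have hcard : (insert i s.1).card = p + 1 := by
    rw [Finset.card_insert_of_notMem hnot, s.2]
  rw [coefAt_eq _ _ hcard]
  have := isHomog_mul (isHomog_mul (isHomog_sign (K := K) (m := m)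
    ((s.1.filter (fun j => j < i)).card)) (isHomog_algF_X (K := K) i))
    (hω ⟨insert i s.1, hcard⟩)
  have hdeg : ((0 : ℤ) + 1 + d) = d + 1 := by ring
  exact hdeg ▸ this

end Dev
set_option maxHeartbeats 1600000 in

/-- Remark 3.3. Let `A` be a central `(n+1)`-arrangement, `H₀ = {x_{n+1}=0} ∈ A`
and `α := x_{n+1}`. For each `p` there is an isomorphism of graded `S`-modules
`Ω^p(A) ≅ (Ω^{p-1}(A) ∧ (dα/α)) ⊕ (Ω^p(A) ∧ (dα/α))` (we state the case `p = 0`, where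
`Ω^{-1} = 0`, separately; a form of coefficient-degree `d` corresponds to a pair of forms of
coefficient-degrees `(d, d-1)`). -/
theorem statement4 (K : Type) [Field K] (n : ℕ)
    (hyps : Finset (Fin (n+1) → K))
    (hne : ∀ a ∈ hyps, a ≠ 0)
    (hdist : ∀ a ∈ hyps, ∀ b ∈ hyps, ∀ c : K, a = c • b → a = b)
    (h0 : kElast K n ∈ hyps) :
    (∃ e : ↥(logForms K (n+1) hyps (oneMult K (n+1)) 0) ≃ₗ[PolyR K (n+1)]
        ↥(wedgeImage K n hyps 0),
      ∀ (d : ℤ) (ω : ↥(logForms K (n+1) hyps (oneMult K (n+1)) 0)),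
        IsHomogForm K (n+1) d (ω : Form K (n+1) 0) ↔
          IsHomogForm K (n+1) (d-1) ((e ω : Form K (n+1) 1))) ∧
    (∀ p : ℕ, ∃ e : ↥(logForms K (n+1) hyps (oneMult K (n+1)) (p+1)) ≃ₗ[PolyR K (n+1)]
        (↥(wedgeImage K n hyps p) × ↥(wedgeImage K n hyps (p+1))),
      ∀ (d : ℤ) (ω : ↥(logForms K (n+1) hyps (oneMult K (n+1)) (p+1))),
        IsHomogForm K (n+1) d (ω : Form K (n+1) (p+1)) ↔
          (IsHomogForm K (n+1) d ((e ω).1 : Form K (n+1) (p+1)) ∧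
            IsHomogForm K (n+1) (d-1) ((e ω).2 : Form K (n+1) (p+2)))) := by
  classical
  have hWle : ∀ q : ℕ, wedgeImage K n hyps q ≤ logForms K (n+1) hyps (oneMult K (n+1)) (q+1) := by
    intro q v hv
    obtain ⟨ν, hν, rfl⟩ := Submodule.mem_map.mp hv
    exact wedge_eta_mem hyps q ν hne hdist h0 hν
  have hHzero : ∀ q : ℕ, contractF K (n+1) (eulerDer K (n+1)) (0 : Form K (n+1) (q+1)) = 0 :=
    fun q => map_zero (contractR (eulerDer K (n+1)) q)
  have hHadd : ∀ (q : ℕ) (a b : Form K (n+1) (q+1)),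
      contractF K (n+1) (eulerDer K (n+1)) (a + b)
        = contractF K (n+1) (eulerDer K (n+1)) a + contractF K (n+1) (eulerDer K (n+1)) b :=
    fun q a b => map_add (contractR (eulerDer K (n+1)) q) a b
  have hWadd : ∀ (q : ℕ) (a b : Form K (n+1) q),
      wedgeF K (n+1) (etaZero K n) q (a + b)
        = wedgeF K (n+1) (etaZero K n) q a + wedgeF K (n+1) (etaZero K n) q b :=
    fun q a b => map_add (wedgeF K (n+1) (etaZero K n) q) a b
  have hWHW : ∀ (q : ℕ) (τ : Form K (n+1) (q+1)),
      wedgeF K (n+1) (etaZero K n) q (contractF K (n+1) (eulerDer K (n+1)) τ)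
        = τ - contractF K (n+1) (eulerDer K (n+1)) (wedgeF K (n+1) (etaZero K n) (q+1) τ) :=
    fun q τ => eq_sub_of_add_eq' (homotopy q τ)
  constructor
  · -- p = 0
    refine ⟨LinearEquiv.ofLinear
      (LinearMap.codRestrict (wedgeImage K n hyps 0)
        ((wedgeR K (n+1) (etaZero K n) 0).comp (Submodule.subtype _))
        (fun ω => Submodule.mem_map_of_mem ω.2))
      (LinearMap.codRestrict (logForms K (n+1) hyps (oneMult K (n+1)) 0)
        ((contractR (eulerDer K (n+1)) 0).comp (Submodule.subtype _))
        (fun v => contract_mem hyps 0 v.1 hne (hWle 0 v.2)))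
      ?_ ?_ , ?_⟩
    · -- f ∘ g = id
      apply LinearMap.ext
      intro v
      apply Subtype.ext
      obtain ⟨ν, hν, hνe⟩ := Submodule.mem_map.mp v.2
      show wedgeF K (n+1) (etaZero K n) 0 (contractF K (n+1) (eulerDer K (n+1)) v.1) = v.1
      rw [hWHW 0 v.1]
      have hz : wedgeF K (n+1) (etaZero K n) 1 v.1 = 0 := by
        rw [← hνe]
        exact wedge_eta_eta 0 ν
      rw [hz, hHzero 1, sub_zero]
    · -- g ∘ f = id
      apply LinearMap.ext
      intro ω
      apply Subtype.ext
      show contractF K (n+1) (eulerDer K (n+1)) (wedgeF K (n+1) (etaZero K n) 0 ω.1) = ω.1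
      exact homotopy0 ω.1
    · intro d ω
      constructor
      · intro hh
        exact isHomogForm_wedge_eta hh
      · intro hh
        have hh' : IsHomogForm K (n+1) (d-1) (wedgeF K (n+1) (etaZero K n) 0 ω.1) := hh
        have h2 := isHomogForm_contract hh'
        rw [homotopy0 ω.1] at h2
        have hd : (d - 1) + 1 = d := by ring
        rwa [hd] at h2
  · -- p + 1
    intro p
    refine ⟨LinearEquiv.ofLinear
      (LinearMap.prod
        (LinearMap.codRestrict (wedgeImage K n hyps p)
          ((wedgeR K (n+1) (etaZero K n) p).comp
            ((contractR (eulerDer K (n+1)) p).comp (Submodule.subtype _)))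
          (fun ω => Submodule.mem_map_of_mem (contract_mem hyps p ω.1 hne ω.2)))
        (LinearMap.codRestrict (wedgeImage K n hyps (p+1))
          ((wedgeR K (n+1) (etaZero K n) (p+1)).comp (Submodule.subtype _))
          (fun ω => Submodule.mem_map_of_mem ω.2)))
      (LinearMap.codRestrict (logForms K (n+1) hyps (oneMult K (n+1)) (p+1))
        ((Submodule.subtype _).comp (LinearMap.fst _ _ _) +
          ((contractR (eulerDer K (n+1)) (p+1)).comp
            ((Submodule.subtype _).comp (LinearMap.snd _ _ _))))
        (fun uv => add_mem (hWle p uv.1.2)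
          (contract_mem hyps (p+1) uv.2.1 hne (hWle (p+1) uv.2.2))))
      ?_ ?_, ?_⟩
    · -- f ∘ g = id
      apply LinearMap.ext
      intro uv
      obtain ⟨u, v⟩ := uv
      obtain ⟨μ, hμ, hμe⟩ := Submodule.mem_map.mp u.2
      obtain ⟨ν, hν, hνe⟩ := Submodule.mem_map.mp v.2
      have hA : wedgeF K (n+1) (etaZero K n) (p+1) u.1 = 0 := by
        rw [← hμe]; exact wedge_eta_eta p μ
      have hC : wedgeF K (n+1) (etaZero K n) (p+2) v.1 = 0 := by
        rw [← hνe]; exact wedge_eta_eta (p+1) ν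
      have hB : wedgeF K (n+1) (etaZero K n) p
          (contractF K (n+1) (eulerDer K (n+1)) u.1) = u.1 := by
        rw [hWHW p u.1, hA, hHzero (p+1), sub_zero]
      have hD : wedgeF K (n+1) (etaZero K n) (p+1)
          (contractF K (n+1) (eulerDer K (n+1)) v.1) = v.1 := by
        rw [hWHW (p+1) v.1, hC, hHzero (p+2), sub_zero]
      have hE : wedgeF K (n+1) (etaZero K n) p
          (contractF K (n+1) (eulerDer K (n+1))
            (contractF K (n+1) (eulerDer K (n+1)) v.1)) = 0 := by
        rw [hWHW p (contractF K (n+1) (eulerDer K (n+1)) v.1), hD, sub_self]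
      apply Prod.ext
      · apply Subtype.ext
        show wedgeF K (n+1) (etaZero K n) p (contractF K (n+1) (eulerDer K (n+1))
          (u.1 + contractF K (n+1) (eulerDer K (n+1)) v.1)) = u.1
        rw [hHadd p u.1 (contractF K (n+1) (eulerDer K (n+1)) v.1),
          hWadd p, hB, hE, add_zero]
      · apply Subtype.ext
        show wedgeF K (n+1) (etaZero K n) (p+1)
          (u.1 + contractF K (n+1) (eulerDer K (n+1)) v.1) = v.1
        rw [hWadd (p+1), hA, hD, zero_add]
    · -- g ∘ f = id
      apply LinearMap.ext
      intro ω
      apply Subtype.ext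
      show wedgeF K (n+1) (etaZero K n) p (contractF K (n+1) (eulerDer K (n+1)) ω.1)
          + contractF K (n+1) (eulerDer K (n+1))
              (wedgeF K (n+1) (etaZero K n) (p+1) ω.1) = ω.1
      exact (add_comm _ _).trans (homotopy p ω.1)
    · intro d ω
      constructor
      · intro hh
        constructor
        · have h1 := isHomogForm_wedge_eta (isHomogForm_contract hh)
          have hd : (d + 1) - 1 = d := by ring
          rw [hd] at h1
          exact h1
        · exact isHomogForm_wedge_eta hh
      · rintro ⟨h1, h2⟩
        have h1' : IsHomogForm K (n+1) d (wedgeF K (n+1) (etaZero K n) p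
            (contractF K (n+1) (eulerDer K (n+1)) ω.1)) := h1
        have h2' : IsHomogForm K (n+1) (d-1)
            (wedgeF K (n+1) (etaZero K n) (p+1) ω.1) := h2
        have h3 := isHomogForm_contract h2'
        have hd : (d - 1) + 1 = d := by ring
        rw [hd] at h3
        have h4 := isHomogForm_add h3 h1'
        have heq := homotopy p ω.1
        rwa [heq] at h4
end

section
/- Let A be a central ℓ-arrangement over a field K, H_0 ∈ A with coordinate ring S' = K[x_1,…,x_{ℓ−1}], and (A'',m) the Ziegler restriction of A onto H_0. Let η̄ be a regular 1-form on H_0 such that for every flat X ∈ L(A'') with dim X > 0, the restriction of η̄ to X vanishes only at the origin of X. Then the zero locus of the ideal I(η̄) := { ⟨θ̄, η̄⟩ : θ̄ ∈ D(A'',m) } ⊆ S' is contained in {0}; equivalently, the radical of I(η̄) contains the irrelevant maximal ideal (x_1,…,x_{ℓ−1}) of S'. -/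
open MvPolynomial

/-- from the proof of Proposition 3.5. Let `A` be a central
`(n+1)`-arrangement, `H₀ = {x_{n+1} = 0} ∈ A`, and `(A'',m)` the Ziegler restriction of `A`
onto `H₀`. Let `η̄ = Σ fᵢ dxᵢ` be a regular 1-form on `H₀` such that for every flat
`X ∈ L(A'')` with `dim X > 0` the restriction of `η̄` to `X` vanishes only at the origin of
`X`. Then the zero locus of `I(η̄) = { ⟨θ̄, η̄⟩ : θ̄ ∈ D(A'',m) }` is contained in `{0}`. -/
theorem statement7 (K : Type) [Field K] (n : ℕ)
    (hyps : Finset (Fin (n+1) → K))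
    (hne : ∀ a ∈ hyps, a ≠ 0)
    (hdist : ∀ a ∈ hyps, ∀ b ∈ hyps, ∀ c : K, a = c • b → a = b)
    (h0 : kElast K n ∈ hyps)
    (f : Fin n → PolyR K n)
    (hgen : ∀ B ⊆ zieglerHyps K n hyps, ∀ v : Fin n → K,
      (∀ b ∈ B, ∑ i, b i * v i = 0) → v ≠ 0 →
        ∃ u : Fin n → K, (∀ b ∈ B, ∑ i, b i * u i = 0) ∧
          ∑ i, u i * MvPolynomial.eval v (f i) ≠ 0) :
    ∀ v : Fin n → K,
      (∀ θ ∈ logDer K n (zieglerHyps K n hyps) (zieglerMult K n hyps),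
        MvPolynomial.eval v (∑ i, θ i * f i) = 0) → v = 0 := by
  classical
  intro v hv
  by_contra hv0
  set Z := zieglerHyps K n hyps with hZ
  set B : Finset (Fin n → K) := Z.filter (fun b => ∑ i, b i * v i = 0) with hB
  obtain ⟨u, hu1, hu2⟩ := hgen B (Finset.filter_subset _ _) v
    (fun b hb => (Finset.mem_filter.mp hb).2) hv0
  set m := zieglerMult K n hyps with hm
  set Q : PolyR K n := ∏ a ∈ Z \ B, (toPoly K n a) ^ m a with hQ
  have hevalα : ∀ a : Fin n → K, MvPolynomial.eval v (toPoly K n a) = ∑ i, a i * v i := by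
    intro a
    simp [toPoly]
  set θ : Fin n → PolyR K n := fun i => C (u i) * Q with hθ
  have hθmem : θ ∈ logDer K n Z m := by
    intro a ha
    have hsum : (∑ i, C (a i) * θ i) = C (∑ i, a i * u i) * Q := by
      rw [map_sum, Finset.sum_mul]
      exact Finset.sum_congr rfl fun i _ => by rw [map_mul]; ring
    rw [hsum]
    by_cases hab : a ∈ B
    · rw [hu1 a hab]
      simp
    · exact Dvd.dvd.mul_left
        (Finset.dvd_prod_of_mem _ (Finset.mem_sdiff.mpr ⟨ha, hab⟩)) _
  have h0' := hv θ hθmem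
  have hQv : MvPolynomial.eval v Q ≠ 0 := by
    rw [hQ, map_prod]
    apply Finset.prod_ne_zero_iff.mpr
    intro a ha
    obtain ⟨haZ, haB⟩ := Finset.mem_sdiff.mp ha
    have : (∑ i, a i * v i) ≠ 0 := fun h => haB (Finset.mem_filter.mpr ⟨haZ, h⟩)
    rw [map_pow, hevalα]
    exact pow_ne_zero _ this
  have hcomp : MvPolynomial.eval v (∑ i, θ i * f i) =
      MvPolynomial.eval v Q * ∑ i, u i * MvPolynomial.eval v (f i) := by
    rw [map_sum, Finset.mul_sum]
    exact Finset.sum_congr rfl fun i _ => by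
      simp only [hθ, map_mul, eval_C]; ring
  rw [hcomp] at h0'
  exact hu2 ((mul_eq_zero.mp h0').resolve_left hQv)
end

section
/- Let (A'',m) be a central multiarrangement in K^{ℓ−1} with coordinate ring S', and let η̄ be a regular 1-form on K^{ℓ−1}. If ω ∈ Ω^p(A'',m) is a cocycle of the complex (Ω^*(A'',m), ∧η̄), i.e. η̄ ∧ ω = 0, then for every θ̄ ∈ D(A'',m) one has ⟨θ̄, η̄⟩·ω = η̄ ∧ ⟨θ̄, ω⟩, so that ⟨θ̄, η̄⟩·ω is a coboundary. Consequently the ideal I(η̄) = { ⟨θ̄, η̄⟩ : θ̄ ∈ D(A'',m) } annihilates the cohomology group H^p(Ω^*(A'',m), ∧η̄) for every p. -/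
open MvPolynomial

noncomputable section AuxStatement9

namespace Statement9Aux

variable {K : Type} [Field K] {n : ℕ}

/-- coefficient function extended to all finsets by zero -/
def asFun {p : ℕ} (ω : Form K n p) : Finset (Fin n) → Frac K n :=
  fun t => if h : t.card = p then ω ⟨t, h⟩ else 0

lemma asFun_apply {p : ℕ} (ω : Form K n p) (t : Finset (Fin n)) (h : t.card = p) :
    asFun ω t = ω ⟨t, h⟩ := dif_pos h

lemma contractF_apply (θ : Fin n → Frac K n) {p : ℕ} (ω : Form K n (p+1))
    (s : {s : Finset (Fin n) // s.card = p}) :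
    contractF K n θ ω s = ∑ i ∈ Finset.univ \ s.1,
      (-1 : Frac K n) ^ ((s.1.filter (fun j => j < i)).card) * θ i * asFun ω (insert i s.1) := by
  rw [contractF, ← Finset.sum_attach (Finset.univ \ s.1)
      (fun i => (-1 : Frac K n) ^ ((s.1.filter (fun j => j < i)).card) * θ i *
        asFun ω (insert i s.1))]
  refine Finset.sum_congr rfl fun i _ => ?_
  have hi : i.1 ∉ s.1 := (Finset.mem_sdiff.mp i.2).2
  rw [asFun_apply _ _ (by rw [Finset.card_insert_of_notMem hi, s.2])]

lemma wedgeF_apply (η : Fin n → Frac K n) {p : ℕ} (ω : Form K n p)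
    (s : {s : Finset (Fin n) // s.card = p+1}) :
    wedgeF K n η p ω s = ∑ i ∈ s.1,
      (-1 : Frac K n) ^ ((s.1.filter (fun j => j < i)).card) * η i * asFun ω (s.1.erase i) := by
  rw [wedgeF]
  show (∑ i ∈ s.1.attach, _) = _
  rw [← Finset.sum_attach s.1
      (fun i => (-1 : Frac K n) ^ ((s.1.filter (fun j => j < i)).card) * η i *
        asFun ω (s.1.erase i))]
  refine Finset.sum_congr rfl fun i _ => ?_
  rw [asFun_apply _ _ (by simp [Finset.card_erase_of_mem i.2, s.2])]

lemma sign_cancel (c : ℕ) : ((-1 : Frac K n)) ^ c * (-1) ^ c = 1 := by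
  rw [← pow_add]
  exact Even.neg_one_pow ⟨c, rfl⟩

/-- the Cartan (antiderivation) identity for the interior product -/
lemma cartan (θ η : Fin n → Frac K n) (p : ℕ) (ω : Form K n (p+1)) :
    contractF K n θ (wedgeF K n η (p+1) ω) =
      ((∑ i, θ i * η i) • ω) - wedgeF K n η p (contractF K n θ ω) := by
  funext s
  obtain ⟨s, hs⟩ := s
  -- the off-diagonal terms
  have key : ∀ i ∈ Finset.univ \ s, ∀ k ∈ s,
      (-1 : Frac K n) ^ ((s.filter (fun j => j < i)).card) * θ i *
        ((-1 : Frac K n) ^ (((insert i s).filter (fun j => j < k)).card) * η k *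
          asFun ω (insert i (s.erase k)))
      = - ((-1 : Frac K n) ^ ((s.filter (fun j => j < k)).card) * η k *
          ((-1 : Frac K n) ^ (((s.erase k).filter (fun j => j < i)).card) * θ i *
            asFun ω (insert i (s.erase k)))) := by
    intro i hi k hk
    have hi' : i ∉ s := (Finset.mem_sdiff.mp hi).2
    have hik : i ≠ k := fun h => hi' (h ▸ hk)
    rw [Finset.filter_erase, Finset.filter_insert]
    rcases lt_or_gt_of_ne hik with h | h
    · have hER : (s.filter (fun j => j < i)).erase k = s.filter (fun j => j < i) :=
        Finset.erase_eq_of_notMem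
          (by simp only [Finset.mem_filter, not_and]; exact fun _ => asymm h)
      rw [if_pos h,
        Finset.card_insert_of_notMem (fun hm => hi' (Finset.mem_filter.mp hm).1), hER]
      rw [pow_succ]
      ring
    · rw [if_neg (asymm h)]
      have hkm : k ∈ s.filter (fun j => j < i) := Finset.mem_filter.mpr ⟨hk, h⟩
      rw [← Finset.card_erase_add_one hkm, pow_succ]
      ring
  -- compute the left-hand side
  have lhs_eq : contractF K n θ (wedgeF K n η (p+1) ω) ⟨s, hs⟩ =
      (∑ i ∈ Finset.univ \ s, θ i * η i * ω ⟨s, hs⟩) +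
      ∑ i ∈ Finset.univ \ s, ∑ k ∈ s,
        (-1 : Frac K n) ^ ((s.filter (fun j => j < i)).card) * θ i *
          ((-1 : Frac K n) ^ (((insert i s).filter (fun j => j < k)).card) * η k *
            asFun ω (insert i (s.erase k))) := by
    rw [contractF_apply]
    rw [← Finset.sum_add_distrib]
    refine Finset.sum_congr rfl fun i hi => ?_
    have hi' : i ∉ s := (Finset.mem_sdiff.mp hi).2
    have hc : (insert i s).card = (p+1)+1 := by
      rw [Finset.card_insert_of_notMem hi', hs]
    rw [asFun_apply _ _ hc, wedgeF_apply, Finset.mul_sum, Finset.sum_insert hi']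
    congr 1
    · -- diagonal term k = i
      rw [Finset.erase_insert hi', Finset.filter_insert, if_neg (lt_irrefl i),
        asFun_apply _ _ hs]
      have := sign_cancel (K := K) (n := n) ((s.filter (fun j => j < i)).card)
      calc (-1 : Frac K n) ^ ((s.filter (fun j => j < i)).card) * θ i *
            ((-1 : Frac K n) ^ ((s.filter (fun j => j < i)).card) * η i * ω ⟨s, hs⟩)
          = ((-1 : Frac K n) ^ ((s.filter (fun j => j < i)).card) *
              (-1) ^ ((s.filter (fun j => j < i)).card)) * (θ i * η i * ω ⟨s, hs⟩) := by ring
        _ = θ i * η i * ω ⟨s, hs⟩ := by rw [this, one_mul]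
    · refine Finset.sum_congr rfl fun k hk => ?_
      have hik : i ≠ k := fun h => hi' (h ▸ hk)
      rw [Finset.erase_insert_of_ne hik]
  -- compute the wedge term of the right-hand side
  have rhs_eq : wedgeF K n η p (contractF K n θ ω) ⟨s, hs⟩ =
      (∑ k ∈ s, θ k * η k * ω ⟨s, hs⟩) +
      ∑ k ∈ s, ∑ i ∈ Finset.univ \ s,
        (-1 : Frac K n) ^ ((s.filter (fun j => j < k)).card) * η k *
          ((-1 : Frac K n) ^ (((s.erase k).filter (fun j => j < i)).card) * θ i *
            asFun ω (insert i (s.erase k))) := by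
    rw [wedgeF_apply]
    rw [← Finset.sum_add_distrib]
    refine Finset.sum_congr rfl fun k hk => ?_
    have hc : (s.erase k).card = p := by simp [Finset.card_erase_of_mem hk, hs]
    rw [asFun_apply _ _ hc, contractF_apply]
    have hset : Finset.univ \ (s.erase k) = insert k (Finset.univ \ s) := by
      ext j
      simp only [Finset.mem_sdiff, Finset.mem_univ, true_and, Finset.mem_erase,
        Finset.mem_insert]
      by_cases hj : j = k <;> simp [hj]
    rw [hset, Finset.sum_insert (by simp [hk]), mul_add, Finset.mul_sum]
    congr 1
    -- diagonal term i = k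
    have hER : (s.filter (fun j => j < k)).erase k = s.filter (fun j => j < k) :=
      Finset.erase_eq_of_notMem
        (by simp only [Finset.mem_filter, not_and]; exact fun _ => lt_irrefl k)
    rw [Finset.insert_erase hk, asFun_apply _ _ hs, Finset.filter_erase, hER]
    have := sign_cancel (K := K) (n := n) ((s.filter (fun j => j < k)).card)
    calc (-1 : Frac K n) ^ ((s.filter (fun j => j < k)).card) * η k *
          ((-1 : Frac K n) ^ ((s.filter (fun j => j < k)).card) * θ k * ω ⟨s, hs⟩)
        = ((-1 : Frac K n) ^ ((s.filter (fun j => j < k)).card) *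
            (-1) ^ ((s.filter (fun j => j < k)).card)) * (θ k * η k * ω ⟨s, hs⟩) := by ring
      _ = θ k * η k * ω ⟨s, hs⟩ := by rw [this, one_mul]
  -- combine
  show contractF K n θ (wedgeF K n η (p+1) ω) ⟨s, hs⟩ =
    (∑ i, θ i * η i) * ω ⟨s, hs⟩ - wedgeF K n η p (contractF K n θ ω) ⟨s, hs⟩
  rw [lhs_eq, rhs_eq]
  have hsplit : (∑ i, θ i * η i) * ω ⟨s, hs⟩ =
      (∑ i ∈ Finset.univ \ s, θ i * η i * ω ⟨s, hs⟩) + ∑ k ∈ s, θ k * η k * ω ⟨s, hs⟩ := by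
    rw [← Finset.sum_mul, ← Finset.sum_mul, ← add_mul,
      Finset.sum_sdiff (Finset.subset_univ s)]
  rw [hsplit]
  have hoff : (∑ i ∈ Finset.univ \ s, ∑ k ∈ s,
      (-1 : Frac K n) ^ ((s.filter (fun j => j < i)).card) * θ i *
        ((-1 : Frac K n) ^ (((insert i s).filter (fun j => j < k)).card) * η k *
          asFun ω (insert i (s.erase k))))
      = - ∑ k ∈ s, ∑ i ∈ Finset.univ \ s,
      (-1 : Frac K n) ^ ((s.filter (fun j => j < k)).card) * η k *
        ((-1 : Frac K n) ^ (((s.erase k).filter (fun j => j < i)).card) * θ i *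
          asFun ω (insert i (s.erase k))) := by
    rw [Finset.sum_comm, ← Finset.sum_neg_distrib]
    refine Finset.sum_congr rfl fun k hk => ?_
    rw [← Finset.sum_neg_distrib]
    exact Finset.sum_congr rfl fun i hi => key i hi k hk
  rw [hoff]
  ring


lemma contract_mem_bot (θ : Fin n → PolyR K n) {p : ℕ} (ω : Form K n (p+1)) (c : Frac K n)
    (h : ∀ t : {t : Finset (Fin n) // t.card = p+1},
      c * ω t ∈ (⊥ : Subalgebra (PolyR K n) (Frac K n)))
    (s : {s : Finset (Fin n) // s.card = p}) :
    c * contractF K n (fun i => algF K n (θ i)) ω s ∈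
      (⊥ : Subalgebra (PolyR K n) (Frac K n)) := by
  rw [contractF_apply, Finset.mul_sum]
  refine Subalgebra.sum_mem _ fun i hi => ?_
  have hi' : i ∉ s.1 := (Finset.mem_sdiff.mp hi).2
  have hc : (insert i s.1).card = p+1 := by rw [Finset.card_insert_of_notMem hi', s.2]
  rw [asFun_apply _ _ hc]
  have hrw : c * ((-1 : Frac K n) ^ ((s.1.filter (fun j => j < i)).card) * algF K n (θ i) *
      ω ⟨insert i s.1, hc⟩) =
    ((-1 : Frac K n) ^ ((s.1.filter (fun j => j < i)).card) * algF K n (θ i)) *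
      (c * ω ⟨insert i s.1, hc⟩) := by ring
  rw [hrw]
  refine mul_mem (mul_mem (pow_mem (neg_mem (one_mem _)) _) ?_) (h _)
  exact Subalgebra.algebraMap_mem _ (θ i)

lemma algF_eq_zero_iff (x : PolyR K n) : algF K n x = 0 ↔ x = 0 :=
  map_eq_zero_iff _ (IsFractionRing.injective (PolyR K n) (Frac K n))

lemma toPoly_ne_zero {a : Fin n → K} (ha : a ≠ 0) : toPoly K n a ≠ 0 := by
  obtain ⟨i, hi⟩ := Function.ne_iff.mp ha
  intro h
  apply hi
  have h2 := congrArg (MvPolynomial.eval (Pi.single i (1 : K))) h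
  simpa [toPoly, Pi.single_apply] using h2

end Statement9Aux

end AuxStatement9

set_option maxHeartbeats 1000000
/-- from the proof of Proposition 3.5. Let `(A'',m)` be a central
multiarrangement in `K^n` and `η̄ = Σ fᵢ dxᵢ` a regular 1-form. If `ω ∈ Ω^{p+1}(A'',m)` is a
cocycle of `(Ω^•(A'',m), ∧η̄)`, i.e. `η̄ ∧ ω = 0`, then for every `θ̄ ∈ D(A'',m)` one has
`⟨θ̄, η̄⟩ · ω = η̄ ∧ ⟨θ̄, ω⟩`, so `⟨θ̄, η̄⟩ · ω` is a coboundary; consequently the ideal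
`I(η̄)` annihilates the cohomology of `(Ω^•(A'',m), ∧η̄)`. -/
theorem statement9 (K : Type) [Field K] (n : ℕ)
    (hyps : Finset (Fin n → K))
    (hne : ∀ a ∈ hyps, a ≠ 0)
    (hdist : ∀ a ∈ hyps, ∀ b ∈ hyps, ∀ c : K, a = c • b → a = b)
    (m : (Fin n → K) → ℕ) (f : Fin n → PolyR K n) (p : ℕ)
    (ω : Form K n (p+1)) (hω : ω ∈ logForms K n hyps m (p+1))
    (hcoc : wedgeR K n (ofPoly1Form K n f) (p+1) ω = 0)
    (θ : Fin n → PolyR K n) (hθ : θ ∈ logDer K n hyps m) :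
    algF K n (∑ i, θ i * f i) • ω =
      wedgeR K n (ofPoly1Form K n f) p (contractF K n (fun i => algF K n (θ i)) ω) ∧
    algF K n (∑ i, θ i * f i) • ω ∈
      Submodule.map (wedgeR K n (ofPoly1Form K n f) p) (logForms K n hyps m p) := by
  classical
  set θF : Fin n → Frac K n := fun i => algF K n (θ i) with hθF
  have hsum : (∑ i, θF i * ofPoly1Form K n f i) = algF K n (∑ i, θ i * f i) := by
    rw [map_sum]
    exact Finset.sum_congr rfl fun i _ => by rw [map_mul]; rfl
  have hcar := Statement9Aux.cartan θF (ofPoly1Form K n f) p ω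
  have hzero : wedgeF K n (ofPoly1Form K n f) (p+1) ω = 0 := hcoc
  rw [hzero] at hcar
  have hc0 : contractF K n θF (0 : Form K n (p+1+1)) = 0 := by
    funext s
    simp [contractF]
  rw [hc0] at hcar
  have heq : algF K n (∑ i, θ i * f i) • ω =
      wedgeR K n (ofPoly1Form K n f) p (contractF K n θF ω) := by
    have h1 : (∑ i, θF i * ofPoly1Form K n f i) • ω =
        wedgeF K n (ofPoly1Form K n f) p (contractF K n θF ω) := sub_eq_zero.mp hcar.symm
    rw [← hsum]
    exact h1
  refine ⟨heq, contractF K n θF ω, ?_, heq.symm⟩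
  -- extract the hypotheses on ω
  obtain ⟨hω1, hω2⟩ := Submodule.mem_inf.mp hω
  have hω1' : ∀ t : {t : Finset (Fin n) // t.card = p+1},
      algF K n (Qp K n hyps m) * ω t ∈ (⊥ : Subalgebra (PolyR K n) (Frac K n)) := by
    intro t
    have h3 := Submodule.mem_comap.mp hω1
    rw [regularForms, Submodule.mem_pi] at h3
    exact h3 t trivial
  have hω2' : ∀ a ∈ hyps, ∀ t : {t : Finset (Fin n) // t.card = p+1+1},
      (algF K n (Qp K n hyps m) / (algF K n (toPoly K n a)) ^ m a) *
        wedgeF K n (dForm K n a) (p+1) ω t ∈ (⊥ : Subalgebra (PolyR K n) (Frac K n)) := by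
    intro a ha t
    have h3 := (Submodule.mem_iInf _).mp ((Submodule.mem_iInf _).mp hω2 a) ha
    have h4 := Submodule.mem_comap.mp h3
    rw [regularForms, Submodule.mem_pi] at h4
    exact h4 t trivial
  refine Submodule.mem_inf.mpr ⟨?_, ?_⟩
  · -- regular part
    rw [Submodule.mem_comap, regularForms, Submodule.mem_pi]
    intro t _
    rw [Subalgebra.mem_toSubmodule]
    exact Statement9Aux.contract_mem_bot θ ω _ hω1' t
  · refine (Submodule.mem_iInf _).mpr fun a => (Submodule.mem_iInf _).mpr fun ha => ?_
    rw [Submodule.mem_comap, regularForms, Submodule.mem_pi]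
    intro t _
    rw [Subalgebra.mem_toSubmodule]
    have hα : (algF K n (toPoly K n a)) ≠ 0 := by
      rw [Ne, Statement9Aux.algF_eq_zero_iff]
      exact Statement9Aux.toPoly_ne_zero (hne a ha)
    obtain ⟨g, hg⟩ := hθ a ha
    have hSg : (∑ i, θF i * dForm K n a i) =
        (algF K n (toPoly K n a)) ^ (m a) * algF K n g := by
      have h5 : (∑ i, θF i * dForm K n a i) = algF K n (∑ i, C (a i) * θ i) := by
        rw [map_sum]
        refine Finset.sum_congr rfl fun i _ => ?_
        show algF K n (θ i) * algF K n (C (a i)) = algF K n (C (a i) * θ i)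
        rw [map_mul, mul_comm]
      rw [h5, hg, map_mul, map_pow]
    have hcA := Statement9Aux.cartan θF (dForm K n a) p ω
    have hw : wedgeF K n (dForm K n a) p (contractF K n θF ω) =
        (∑ i, θF i * dForm K n a i) • ω -
          contractF K n θF (wedgeF K n (dForm K n a) (p+1) ω) := by
      rw [hcA, sub_sub_cancel]
    show (algF K n (Qp K n hyps m) / (algF K n (toPoly K n a)) ^ m a) *
        wedgeF K n (dForm K n a) p (contractF K n θF ω) t ∈ _
    rw [hw, Pi.sub_apply, Pi.smul_apply, smul_eq_mul, hSg, mul_sub]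
    have h6 : algF K n (Qp K n hyps m) / (algF K n (toPoly K n a)) ^ m a *
        ((algF K n (toPoly K n a)) ^ (m a) * algF K n g * ω t) =
        algF K n g * (algF K n (Qp K n hyps m) * ω t) := by
      field_simp
    rw [h6]
    refine sub_mem (mul_mem ?_ (hω1' t)) ?_
    · exact Subalgebra.algebraMap_mem _ g
    · exact Statement9Aux.contract_mem_bot θ (wedgeF K n (dForm K n a) (p+1) ω) _
        (hω2' a ha) t
end
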